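/- arXiv:2309.12128 — 4 statements merged into one kernel-verified Lean document; each statement's English description precedes it below -/
import Mathlib

section
/- Suppose the KL assumption holds with the Łojasiewicz desingularizing function ψ(s) = c·s^{1/2} for some c > 0, and L(y(0)) > 0. Then for all t ≥ 0: L(y(t)) ≤ L(y(0))·exp(−(σ_F²·σ₀²/c²)·t), and, with θ∞ := lim_{t→∞} θ(t), ‖θ(t) − θ∞‖ ≤ (2c/(σ₀·σ_F))·√(L(y(0)))·exp(−(σ_F²·σ₀²/(2c²))·t). -/
open Filter MeasureTheory ProbabilityTheory
open scoped Topology NNReal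
open scoped RealInnerProductSpace

noncomputable def sigmaMin {E F : Type*} [NormedAddCommGroup E] [InnerProductSpace ℝ E]
    [CompleteSpace E] [NormedAddCommGroup F] [InnerProductSpace ℝ F] [CompleteSpace F]
    (A : E →L[ℝ] F) : ℝ :=
  ⨅ w : {w : F // ‖w‖ = 1}, ‖ContinuousLinearMap.adjoint A w.1‖

lemma sigmaMin_mul_le {E F : Type*} [NormedAddCommGroup E] [InnerProductSpace ℝ E]
    [CompleteSpace E] [NormedAddCommGroup F] [InnerProductSpace ℝ F] [CompleteSpace F]
    (A : E →L[ℝ] F) (w : F) :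
    sigmaMin A * ‖w‖ ≤ ‖ContinuousLinearMap.adjoint A w‖ := by
  rcases eq_or_ne w 0 with rfl | hw
  · simp
  · have hb : BddBelow (Set.range fun w : {w : F // ‖w‖ = 1} =>
        ‖ContinuousLinearMap.adjoint A w.1‖) :=
      ⟨0, by rintro y ⟨i, rfl⟩; exact norm_nonneg _⟩
    have h1 : sigmaMin A ≤ ‖ContinuousLinearMap.adjoint A (‖w‖⁻¹ • w)‖ :=
      ciInf_le hb (⟨‖w‖⁻¹ • w, norm_smul_inv_norm hw⟩ : {w : F // ‖w‖ = 1})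
    have hnw : (0:ℝ) < ‖w‖ := norm_pos_iff.2 hw
    rw [_root_.map_smul, norm_smul, norm_inv, norm_norm] at h1
    calc sigmaMin A * ‖w‖ ≤ ‖w‖⁻¹ * ‖ContinuousLinearMap.adjoint A w‖ * ‖w‖ := by
          exact mul_le_mul_of_nonneg_right h1 hnw.le
      _ = ‖ContinuousLinearMap.adjoint A w‖ := by field_simp

set_option maxHeartbeats 2000000 in
theorem stmt9
    {n m p : ℕ} (hn : 0 < n) (hm : 0 < m) (hp : 0 < p)
    (L : EuclideanSpace ℝ (Fin m) → ℝ)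
    (F : EuclideanSpace ℝ (Fin n) → EuclideanSpace ℝ (Fin m))
    (g : EuclideanSpace ℝ (Fin p) → EuclideanSpace ℝ (Fin n))
    (hL : ContDiff ℝ 1 L)
    (hLnonneg : ∀ v, 0 ≤ L v) (hLmin : ∃ v, L v = 0)
    (hLgrad : ∀ s : Set (EuclideanSpace ℝ (Fin m)), Bornology.IsBounded s →
      ∃ K : ℝ≥0, LipschitzOnWith K (fun v => gradient L v) s)
    (hF : ContDiff ℝ 1 F)
    (hJF : ∀ s : Set (EuclideanSpace ℝ (Fin n)), Bornology.IsBounded s →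
      ∃ K : ℝ≥0, LipschitzOnWith K (fun x => fderiv ℝ F x) s)
    (hg : ContDiff ℝ 1 g)
    (hJg : ∀ s : Set (EuclideanSpace ℝ (Fin p)), Bornology.IsBounded s →
      ∃ K : ℝ≥0, LipschitzOnWith K (fun q => fderiv ℝ g q) s)
    (θ θ' : ℝ → EuclideanSpace ℝ (Fin p)) (θ₀ : EuclideanSpace ℝ (Fin p))
    (hθ0 : θ 0 = θ₀)
    (hθd : ∀ t ≥ (0:ℝ), HasDerivAt θ (θ' t) t)
    (hθcont : ContinuousOn θ' (Set.Ici 0))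
    (hflow : ∀ t ≥ (0:ℝ), θ' t = -gradient (fun q => L (F (g q))) (θ t))
    (c : ℝ) (hc : 0 < c)
    (r₀ : ℝ) (hr₀ : L (F (g (θ 0))) < r₀)
    (hKL : ∀ v : EuclideanSpace ℝ (Fin m), 0 < L v → L v < r₀ →
      1 ≤ c / (2 * Real.sqrt (L v)) * ‖gradient L v‖)
    (σF : ℝ) (hσF : 0 < σF)
    (σ₀ : ℝ) (hσ₀ : σ₀ = sigmaMin (fderiv ℝ g θ₀)) (hσ₀pos : 0 < σ₀)
    (R : ℝ) (hRpos : 0 < R)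
    (hinj : ∀ q ∈ Metric.closedBall θ₀ R,
      gradient L (F (g q)) ∈ LinearMap.range (fderiv ℝ F (g q) : EuclideanSpace ℝ (Fin n) →ₗ[ℝ] EuclideanSpace ℝ (Fin m)) ∧
      ∀ z ∈ LinearMap.range (fderiv ℝ F (g q) : EuclideanSpace ℝ (Fin n) →ₗ[ℝ] EuclideanSpace ℝ (Fin m)),
        σF * ‖z‖ ≤ ‖ContinuousLinearMap.adjoint (fderiv ℝ F (g q)) z‖)
    (hLip : ∀ a ∈ Metric.closedBall θ₀ R, ∀ b ∈ Metric.closedBall θ₀ R,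
      ‖fderiv ℝ g a - fderiv ℝ g b‖ ≤ σ₀ / (2 * R) * ‖a - b‖)
    (hRR : 2 / (σF * σ₀) * (c * Real.sqrt (L (F (g θ₀)))) < R)
    (hL0pos : 0 < L (F (g (θ 0)))) :
    ∃ θlim : EuclideanSpace ℝ (Fin p), Tendsto θ atTop (𝓝 θlim) ∧
      ∀ t ≥ (0:ℝ),
        L (F (g (θ t))) ≤ L (F (g (θ 0))) * Real.exp (-(σF ^ 2 * σ₀ ^ 2 / c ^ 2) * t) ∧
        ‖θ t - θlim‖ ≤ 2 * c / (σ₀ * σF) * Real.sqrt (L (F (g (θ 0)))) *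
          Real.exp (-(σF ^ 2 * σ₀ ^ 2 / (2 * c ^ 2)) * t) := by
  classical
  set f : EuclideanSpace ℝ (Fin p) → ℝ := fun q => L (F (g q)) with hfdef
  set h : ℝ → ℝ := fun t => f (θ t) with hhdef
  set M : ℝ := 2 * c / (σ₀ * σF) with hMdef
  set K : ℝ := σF ^ 2 * σ₀ ^ 2 / c ^ 2 with hKdef
  have hσσ : (0:ℝ) < σ₀ * σF := mul_pos hσ₀pos hσF
  have hMpos : 0 < M := by rw [hMdef]; positivity
  have hKpos : 0 < K := by rw [hKdef]; positivity
  have heq : ∀ s : ℝ, h s = L (F (g (θ s))) := fun s => by rw [hhdef, hfdef]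
  have hfh : ∀ s : ℝ, f (θ s) = h s := fun s => by rw [hhdef]
  have hLpos' : ∀ s : ℝ, 0 ≤ h s := fun s => by rw [heq s]; exact hLnonneg _
  have hh0pos : 0 < h 0 := by rw [heq 0]; exact hL0pos
  have hh0r₀ : h 0 < r₀ := by rw [heq 0]; exact hr₀
  -- differentiability
  have hdL : Differentiable ℝ L := hL.differentiable one_ne_zero
  have hdF : Differentiable ℝ F := hF.differentiable one_ne_zero
  have hdg : Differentiable ℝ g := hg.differentiable one_ne_zero
  have hfdiff : Differentiable ℝ f := by
    rw [hfdef]; exact fun q => (hdL _).comp q ((hdF _).comp q (hdg q))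
  -- gradient chain rule
  have hgrad : ∀ q, gradient f q = ContinuousLinearMap.adjoint (fderiv ℝ g q)
      (ContinuousLinearMap.adjoint (fderiv ℝ F (g q)) (gradient L (F (g q)))) := by
    intro q
    have h1 : fderiv ℝ f q =
        (fderiv ℝ L (F (g q))).comp ((fderiv ℝ F (g q)).comp (fderiv ℝ g q)) := by
      rw [hfdef, show (fun q => L (F (g q))) = L ∘ (F ∘ g) from rfl,
        fderiv_comp q (hdL _) ((hdF _).comp q (hdg q)), fderiv_comp q (hdF _) (hdg q)]
      rfl
    apply ext_inner_right ℝ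
    intro u
    rw [gradient, InnerProductSpace.toDual_symm_apply, h1]
    simp only [ContinuousLinearMap.coe_comp', Function.comp_apply,
      ContinuousLinearMap.adjoint_inner_left]
    rw [← InnerProductSpace.toDual_symm_apply (𝕜 := ℝ)]
    rfl
  -- derivative of h
  have hθcontOn : ContinuousOn θ (Set.Ici 0) :=
    fun t ht => (hθd t ht).continuousAt.continuousWithinAt
  have hhd : ∀ t, 0 ≤ t → HasDerivAt h (-‖gradient f (θ t)‖ ^ 2) t := by
    intro t ht
    have h1 : HasDerivAt (fun s => f (θ s)) (fderiv ℝ f (θ t) (θ' t)) t :=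
      (hfdiff (θ t)).hasFDerivAt.comp_hasDerivAt t (hθd t ht)
    have e1 : ⟪gradient f (θ t), θ' t⟫ = fderiv ℝ f (θ t) (θ' t) := by
      rw [gradient, InnerProductSpace.toDual_symm_apply]
    have h2 : fderiv ℝ f (θ t) (θ' t) = -‖gradient f (θ t)‖ ^ 2 := by
      rw [← e1, hflow t ht, inner_neg_right, real_inner_self_eq_norm_sq]
    rw [hhdef]
    exact h2 ▸ h1
  have hθ'eq : ∀ t, 0 ≤ t → ‖θ' t‖ = ‖gradient f (θ t)‖ := fun t ht => by
    rw [hflow t ht, norm_neg]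
  have hhcont : ContinuousOn h (Set.Ici 0) := by
    rw [hhdef]; exact hfdiff.continuous.comp_continuousOn hθcontOn
  have hmono : AntitoneOn h (Set.Ici 0) := by
    apply antitoneOn_of_deriv_nonpos (convex_Ici 0) hhcont
    · intro x hx
      rw [interior_Ici] at hx
      exact (hhd x hx.le).differentiableAt.differentiableWithinAt
    · intro x hx
      rw [interior_Ici] at hx
      rw [(hhd x hx.le).deriv]
      exact neg_nonpos.2 (sq_nonneg _)
  have hhle : ∀ t, 0 ≤ t → h t ≤ h 0 :=
    fun t ht => hmono Set.self_mem_Ici (Set.mem_Ici.2 ht) ht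
  -- gradient vanishes at zeros of h
  have hgradzero : ∀ t, 0 ≤ t → h t = 0 → gradient f (θ t) = 0 := by
    intro t ht h0
    have hLt : L (F (g (θ t))) = 0 := by rw [← heq t]; exact h0
    have hmin : IsLocalMin L (F (g (θ t))) :=
      Filter.Eventually.of_forall fun v => by rw [hLt]; exact hLnonneg v
    have hgL : gradient L (F (g (θ t))) = 0 := by
      rw [gradient, hmin.fderiv_eq_zero, map_zero]
    rw [hgrad (θ t), hgL, map_zero, map_zero]
  -- θ is constant after h hits zero
  have hconst : ∀ t, 0 ≤ t → h t = 0 → ∀ s, t ≤ s → θ s = θ t := by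
    intro t ht h0 s hs
    have key : ∀ x ∈ Set.Icc t s, θ x = θ t := by
      apply constant_of_has_deriv_right_zero
      · exact hθcontOn.mono fun y hy => le_trans ht hy.1
      · intro x hx
        have hx0 : 0 ≤ x := le_trans ht hx.1
        have hhx : h x = 0 := le_antisymm
          (h0 ▸ hmono (Set.mem_Ici.2 ht) (Set.mem_Ici.2 hx0) hx.1) (hLpos' x)
        have hz : θ' x = 0 := by rw [hflow x hx0, hgradzero x hx0 hhx, neg_zero]
        exact hz ▸ (hθd x hx0).hasDerivWithinAt
    exact key s (Set.right_mem_Icc.2 hs)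
  -- the key gradient lower bound
  have hGLB : ∀ q, dist q θ₀ ≤ R → 0 < f q → f q < r₀ →
      σ₀ * σF * Real.sqrt (f q) ≤ c * ‖gradient f q‖ := by
    intro q hq hpos hlt
    have hq' : q ∈ Metric.closedBall θ₀ R := Metric.mem_closedBall.2 hq
    have hLq : (0:ℝ) < L (F (g q)) := by simp only [hfdef] at hpos; exact hpos
    have hLlt : L (F (g q)) < r₀ := by simp only [hfdef] at hlt; exact hlt
    have hkl := hKL (F (g q)) hLq hLlt
    have hs : 0 < Real.sqrt (L (F (g q))) := Real.sqrt_pos.2 hLq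
    have hkl2 : 2 * Real.sqrt (L (F (g q))) ≤ c * ‖gradient L (F (g q))‖ := by
      rw [div_mul_eq_mul_div,
        le_div_iff₀ (by linarith : (0:ℝ) < 2 * Real.sqrt (L (F (g q))))] at hkl
      linarith
    obtain ⟨hmem, hlow⟩ := hinj q hq'
    have hw : σF * ‖gradient L (F (g q))‖ ≤
        ‖ContinuousLinearMap.adjoint (fderiv ℝ F (g q)) (gradient L (F (g q)))‖ :=
      hlow _ hmem
    have hJglb : ∀ u : EuclideanSpace ℝ (Fin n),
        σ₀ / 2 * ‖u‖ ≤ ‖ContinuousLinearMap.adjoint (fderiv ℝ g q) u‖ := by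
      intro u
      have l1 : σ₀ * ‖u‖ ≤ ‖ContinuousLinearMap.adjoint (fderiv ℝ g θ₀) u‖ := by
        rw [hσ₀]; exact sigmaMin_mul_le _ u
      have l2 : ‖ContinuousLinearMap.adjoint (fderiv ℝ g θ₀) u -
          ContinuousLinearMap.adjoint (fderiv ℝ g q) u‖ ≤ σ₀ / 2 * ‖u‖ := by
        have e1 : ContinuousLinearMap.adjoint (fderiv ℝ g θ₀) u -
            ContinuousLinearMap.adjoint (fderiv ℝ g q) u
            = (ContinuousLinearMap.adjoint (fderiv ℝ g θ₀ - fderiv ℝ g q)) u := by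
          rw [map_sub]; rfl
        rw [e1]
        have hd : ‖θ₀ - q‖ ≤ R := by rw [← dist_eq_norm, dist_comm]; exact hq
        calc ‖(ContinuousLinearMap.adjoint (fderiv ℝ g θ₀ - fderiv ℝ g q)) u‖
            ≤ ‖ContinuousLinearMap.adjoint (fderiv ℝ g θ₀ - fderiv ℝ g q)‖ * ‖u‖ :=
              ContinuousLinearMap.le_opNorm _ _
          _ = ‖fderiv ℝ g θ₀ - fderiv ℝ g q‖ * ‖u‖ := by
              rw [LinearIsometryEquiv.norm_map]
          _ ≤ (σ₀ / (2 * R) * ‖θ₀ - q‖) * ‖u‖ :=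
              mul_le_mul_of_nonneg_right
                (hLip θ₀ (Metric.mem_closedBall_self hRpos.le) q hq') (norm_nonneg _)
          _ ≤ σ₀ / 2 * ‖u‖ := by
              have h5 : σ₀ / (2 * R) * ‖θ₀ - q‖ ≤ σ₀ / 2 := by
                calc σ₀ / (2 * R) * ‖θ₀ - q‖ ≤ σ₀ / (2 * R) * R :=
                      mul_le_mul_of_nonneg_left hd
                        (le_of_lt (div_pos hσ₀pos (by linarith)))
                  _ = σ₀ / 2 := by
                      rw [div_mul_eq_mul_div, mul_comm 2 R, ← div_div,
                        mul_div_assoc, div_self (ne_of_gt hRpos), mul_one]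
              exact mul_le_mul_of_nonneg_right h5 (norm_nonneg _)
      have l3 := norm_sub_norm_le (ContinuousLinearMap.adjoint (fderiv ℝ g θ₀) u)
        (ContinuousLinearMap.adjoint (fderiv ℝ g q) u)
      linarith
    have hfq : Real.sqrt (f q) = Real.sqrt (L (F (g q))) := by simp only [hfdef]
    have h1 := hJglb (ContinuousLinearMap.adjoint (fderiv ℝ F (g q)) (gradient L (F (g q))))
    rw [hgrad q, hfq]
    calc σ₀ * σF * Real.sqrt (L (F (g q)))
        = σ₀ * σF / 2 * (2 * Real.sqrt (L (F (g q)))) := by ring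
      _ ≤ σ₀ * σF / 2 * (c * ‖gradient L (F (g q))‖) :=
          mul_le_mul_of_nonneg_left hkl2 (by positivity)
      _ = c * σ₀ / 2 * (σF * ‖gradient L (F (g q))‖) := by ring
      _ ≤ c * σ₀ / 2 *
          ‖ContinuousLinearMap.adjoint (fderiv ℝ F (g q)) (gradient L (F (g q)))‖ :=
          mul_le_mul_of_nonneg_left hw (by positivity)
      _ = c * (σ₀ / 2 *
          ‖ContinuousLinearMap.adjoint (fderiv ℝ F (g q)) (gradient L (F (g q)))‖) := by ring
      _ ≤ c * ‖ContinuousLinearMap.adjoint (fderiv ℝ g q)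
          (ContinuousLinearMap.adjoint (fderiv ℝ F (g q)) (gradient L (F (g q))))‖ :=
          mul_le_mul_of_nonneg_left h1 hc.le
  -- R' bound
  have hsq0 : 0 < Real.sqrt (h 0) := Real.sqrt_pos.2 hh0pos
  have hR'pos : 0 < M * Real.sqrt (h 0) := mul_pos hMpos hsq0
  have hR'R : M * Real.sqrt (h 0) < R := by
    have e : h 0 = L (F (g θ₀)) := by rw [heq 0, hθ0]
    rw [hMdef, e]
    calc 2 * c / (σ₀ * σF) * Real.sqrt (L (F (g θ₀)))
        = 2 / (σF * σ₀) * (c * Real.sqrt (L (F (g θ₀)))) := by ring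
      _ < R := hRR
  -- the core length estimate
  have hCORE : ∀ a b : ℝ, 0 ≤ a → a ≤ b → (∀ s, a ≤ s → s ≤ b → dist (θ s) θ₀ ≤ R) →
      ‖θ b - θ a‖ ≤ M * (Real.sqrt (h a) - Real.sqrt (h b)) := by
    have hsub : ∀ a b : ℝ, 0 ≤ a → a ≤ b →
        (∀ s, a ≤ s → s ≤ b → dist (θ s) θ₀ ≤ R) →
        (∀ s, a ≤ s → s < b → 0 < h s) →
        ‖θ b - θ a‖ ≤ M * (Real.sqrt (h a) - Real.sqrt (h b)) := by
      intro a b ha hab hball hpos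
      have hIcc : Set.Icc a b ⊆ Set.Ici (0:ℝ) := fun y hy => le_trans ha hy.1
      have hcont : ContinuousOn (fun t => θ t - θ a) (Set.Icc a b) :=
        (hθcontOn.mono hIcc).sub continuousOn_const
      have hf' : ∀ x ∈ Set.Ico a b, HasDerivWithinAt (fun t => θ t - θ a) (θ' x)
          (Set.Ici x) x := fun x hx =>
        ((hθd x (le_trans ha hx.1)).sub_const _).hasDerivWithinAt
      have hBcont : ContinuousOn
          (fun t => M * (Real.sqrt (h a) - Real.sqrt (h t))) (Set.Icc a b) :=
        continuousOn_const.mul (continuousOn_const.sub ((hhcont.mono hIcc).sqrt))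
      have hB' : ∀ x ∈ Set.Ico a b, HasDerivWithinAt
          (fun s => M * (Real.sqrt (h a) - Real.sqrt (h s)))
          (M * ‖gradient f (θ x)‖ ^ 2 / (2 * Real.sqrt (h x))) (Set.Ici x) x := by
        intro x hx
        have hx0 : 0 ≤ x := le_trans ha hx.1
        have hhx : 0 < h x := hpos x hx.1 hx.2
        have hsx : Real.sqrt (h x) ≠ 0 := ne_of_gt (Real.sqrt_pos.2 hhx)
        have hsd : HasDerivAt (fun s => Real.sqrt (h s))
            (1 / (2 * Real.sqrt (h x)) * -‖gradient f (θ x)‖ ^ 2) x :=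
          (Real.hasDerivAt_sqrt (ne_of_gt hhx)).comp x (hhd x hx0)
        have h2 := ((hasDerivAt_const x (Real.sqrt (h a))).sub hsd).const_mul M
        have h3 : M * (0 - 1 / (2 * Real.sqrt (h x)) * -‖gradient f (θ x)‖ ^ 2)
            = M * ‖gradient f (θ x)‖ ^ 2 / (2 * Real.sqrt (h x)) := by
          field_simp
          ring
        exact (h3 ▸ h2).hasDerivWithinAt
      have hbound : ∀ x ∈ Set.Ico a b,
          ‖θ' x‖ ≤ M * ‖gradient f (θ x)‖ ^ 2 / (2 * Real.sqrt (h x)) := by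
        intro x hx
        have hx0 : 0 ≤ x := le_trans ha hx.1
        have hhx : 0 < h x := hpos x hx.1 hx.2
        have hsx : 0 < Real.sqrt (h x) := Real.sqrt_pos.2 hhx
        have hglb := hGLB (θ x) (hball x hx.1 hx.2.le)
          (by rw [hfh x]; exact hhx)
          (by rw [hfh x]; exact lt_of_le_of_lt (hhle x hx0) hh0r₀)
        rw [hfh x] at hglb
        rw [hθ'eq x hx0, le_div_iff₀ (by linarith : (0:ℝ) < 2 * Real.sqrt (h x)),
          hMdef, div_mul_eq_mul_div, le_div_iff₀ hσσ]
        nlinarith [norm_nonneg (gradient f (θ x)), hglb, hsx,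
          mul_le_mul_of_nonneg_left hglb
            (by positivity : (0:ℝ) ≤ 2 * ‖gradient f (θ x)‖)]
      have key := image_norm_le_of_norm_deriv_right_le_deriv_boundary' hcont hf'
        (by simp) hBcont hB' hbound (Set.right_mem_Icc.2 hab)
      exact key
    intro a b ha hab hball
    by_cases hv : ∃ s, (a ≤ s ∧ s ≤ b) ∧ h s = 0
    · have hSne : Set.Nonempty {s : ℝ | (a ≤ s ∧ s ≤ b) ∧ h s = 0} := hv
      have hSbdd : BddBelow {s : ℝ | (a ≤ s ∧ s ≤ b) ∧ h s = 0} :=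
        ⟨a, fun s hs => hs.1.1⟩
      have hSclosed : IsClosed {s : ℝ | (a ≤ s ∧ s ≤ b) ∧ h s = 0} := by
        have e : {s : ℝ | (a ≤ s ∧ s ≤ b) ∧ h s = 0} = Set.Icc a b ∩ h ⁻¹' {0} := by
          ext s
          simp [Set.mem_Icc]
        rw [e]
        exact (hhcont.mono fun y hy => le_trans ha hy.1).preimage_isClosed_of_isClosed
          isClosed_Icc isClosed_singleton
      have hTS := hSclosed.csInf_mem hSne hSbdd
      obtain ⟨⟨haT, hTb⟩, hT0⟩ := hTS
      have hpos : ∀ s, a ≤ s → s < sInf {s : ℝ | (a ≤ s ∧ s ≤ b) ∧ h s = 0} → 0 < h s := by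
        intro s h1 h2
        rcases (hLpos' s).lt_or_eq with hlt | heq0
        · exact hlt
        · exact absurd (csInf_le hSbdd ⟨⟨h1, le_trans h2.le hTb⟩, heq0.symm⟩)
            (not_le.2 h2)
      have p1 := hsub a (sInf {s : ℝ | (a ≤ s ∧ s ≤ b) ∧ h s = 0}) ha haT
        (fun s h1 h2 => hball s h1 (le_trans h2 hTb)) hpos
      have p2 : θ b = θ (sInf {s : ℝ | (a ≤ s ∧ s ≤ b) ∧ h s = 0}) :=
        hconst _ (le_trans ha haT) hT0 b hTb
      have p3 : h b = 0 := by rw [← hfh b, p2, hfh, hT0]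
      calc ‖θ b - θ a‖ = ‖θ (sInf {s : ℝ | (a ≤ s ∧ s ≤ b) ∧ h s = 0}) - θ a‖ := by
            rw [p2]
        _ ≤ M * (Real.sqrt (h a) -
            Real.sqrt (h (sInf {s : ℝ | (a ≤ s ∧ s ≤ b) ∧ h s = 0}))) := p1
        _ = M * (Real.sqrt (h a) - Real.sqrt (h b)) := by rw [hT0, p3]
    · push_neg at hv
      exact hsub a b ha hab hball
        (fun s h1 h2 => (hLpos' s).lt_of_ne (Ne.symm (hv s ⟨h1, h2.le⟩)))
  -- the flow stays in the ball
  have hSTAY : ∀ t, 0 ≤ t → dist (θ t) θ₀ ≤ M * Real.sqrt (h 0) := by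
    by_contra hcon
    push_neg at hcon
    obtain ⟨t₂, ht₂0, ht₂⟩ := hcon
    have hSne : Set.Nonempty {t : ℝ | 0 ≤ t ∧ M * Real.sqrt (h 0) < dist (θ t) θ₀} :=
      ⟨t₂, ht₂0, ht₂⟩
    have hSbdd : BddBelow {t : ℝ | 0 ≤ t ∧ M * Real.sqrt (h 0) < dist (θ t) θ₀} :=
      ⟨0, fun s hs => hs.1⟩
    set T := sInf {t : ℝ | 0 ≤ t ∧ M * Real.sqrt (h 0) < dist (θ t) θ₀} with hTdef
    have hT0 : 0 ≤ T := le_csInf hSne fun s hs => hs.1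
    have hdcont : ContinuousOn (fun s => dist (θ s) θ₀) (Set.Ici 0) :=
      (continuous_id.dist continuous_const).comp_continuousOn hθcontOn
    have hTub : ∀ s, 0 ≤ s → s < T → dist (θ s) θ₀ ≤ M * Real.sqrt (h 0) := by
      intro s h1 h2
      by_contra hcc
      exact absurd (csInf_le hSbdd ⟨h1, lt_of_not_ge hcc⟩) (not_le.2 h2)
    have hge : M * Real.sqrt (h 0) ≤ dist (θ T) θ₀ := by
      have hcl : T ∈ closure {t : ℝ | 0 ≤ t ∧ M * Real.sqrt (h 0) < dist (θ t) θ₀} :=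
        csInf_mem_closure hSne hSbdd
      have hne : (𝓝[{t : ℝ | 0 ≤ t ∧ M * Real.sqrt (h 0) < dist (θ t) θ₀}] T).NeBot :=
        mem_closure_iff_nhdsWithin_neBot.1 hcl
      have hcw : ContinuousWithinAt (fun s => dist (θ s) θ₀)
          {t : ℝ | 0 ≤ t ∧ M * Real.sqrt (h 0) < dist (θ t) θ₀} T :=
        (hdcont T hT0).mono fun x hx => hx.1
      exact ge_of_tendsto hcw (eventually_nhdsWithin_of_forall fun x hx => hx.2.le)
    have hle : dist (θ T) θ₀ ≤ M * Real.sqrt (h 0) := by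
      rcases eq_or_lt_of_le hT0 with he | hlt
      · rw [← he, hθ0, dist_self]; exact hR'pos.le
      · have hcl : T ∈ closure (Set.Ico 0 T) := by
          rw [closure_Ico (ne_of_lt hlt)]; exact ⟨hT0, le_rfl⟩
        have hne : (𝓝[Set.Ico 0 T] T).NeBot := mem_closure_iff_nhdsWithin_neBot.1 hcl
        have hcw : ContinuousWithinAt (fun s => dist (θ s) θ₀) (Set.Ico 0 T) T :=
          (hdcont T hT0).mono fun x hx => hx.1
        exact le_of_tendsto hcw
          (eventually_nhdsWithin_of_forall fun x hx => hTub x hx.1 hx.2)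
    have hball : ∀ s, 0 ≤ s → s ≤ T → dist (θ s) θ₀ ≤ R := by
      intro s h1 h2
      rcases lt_or_eq_of_le h2 with h3 | h3
      · exact (hTub s h1 h3).trans hR'R.le
      · rw [h3]; exact hle.trans hR'R.le
    have hcore := hCORE 0 T le_rfl hT0 fun s h1 h2 => hball s h1 h2
    have hge' : M * Real.sqrt (h 0) ≤ ‖θ T - θ 0‖ := by
      rw [dist_eq_norm, ← hθ0] at hge
      exact hge
    have hsT : Real.sqrt (h T) ≤ 0 := by
      nlinarith [hMpos, Real.sqrt_nonneg (h T)]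
    have hhT : h T = 0 := by
      have h6 := Real.sqrt_eq_zero'.1 (le_antisymm hsT (Real.sqrt_nonneg _))
      exact le_antisymm h6 (hLpos' _)
    obtain ⟨t₁, ht₁⟩ := hSne
    have hTt₁ : T ≤ t₁ := csInf_le hSbdd ht₁
    have hc1 : θ t₁ = θ T := hconst T hT0 hhT t₁ hTt₁
    have hc2 : dist (θ t₁) θ₀ ≤ M * Real.sqrt (h 0) := by rw [hc1]; exact hle
    exact absurd hc2 (not_le.2 ht₁.2)
  -- exponential decay of h
  have hEXP : ∀ t, 0 ≤ t → h t ≤ h 0 * Real.exp (-(K * t)) := by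
    intro t ht
    by_cases hv : ∃ s, 0 ≤ s ∧ s ≤ t ∧ h s = 0
    · obtain ⟨s, hs0, hst, hs⟩ := hv
      have h1 : h t ≤ 0 := by
        rw [← hs]
        exact hmono (Set.mem_Ici.2 hs0) (Set.mem_Ici.2 ht) hst
      have h2 : h t = 0 := le_antisymm h1 (hLpos' t)
      rw [h2]
      positivity
    · push_neg at hv
      have hpos : ∀ s, 0 ≤ s → s ≤ t → 0 < h s :=
        fun s h1 h2 => (hLpos' s).lt_of_ne (Ne.symm (hv s h1 h2))
      have hud : ∀ s, 0 ≤ s → HasDerivAt (fun r => h r * Real.exp (K * r))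
          (-‖gradient f (θ s)‖ ^ 2 * Real.exp (K * s) +
            h s * (Real.exp (K * s) * K)) s := by
        intro s hs0
        have he : HasDerivAt (fun r : ℝ => Real.exp (K * r)) (Real.exp (K * s) * K) s := by
          simpa [Function.comp_def] using (Real.hasDerivAt_exp (K * s)).comp s (HasDerivAt.const_mul K (hasDerivAt_id s))
        exact (hhd s hs0).mul he
      have hanti : AntitoneOn (fun r => h r * Real.exp (K * r)) (Set.Icc 0 t) := by
        apply antitoneOn_of_deriv_nonpos (convex_Icc 0 t)
        · exact (hhcont.mono fun y hy => hy.1).mul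
            ((Real.continuous_exp.comp (continuous_const.mul continuous_id)).continuousOn)
        · intro x hx
          rw [interior_Icc] at hx
          exact (hud x hx.1.le).differentiableAt.differentiableWithinAt
        · intro x hx
          rw [interior_Icc] at hx
          rw [(hud x hx.1.le).deriv]
          have hballx := (hSTAY x hx.1.le).trans hR'R.le
          have hpx := hpos x hx.1.le hx.2.le
          have hglb := hGLB (θ x) hballx
            (by rw [hfh x]; exact hpx)
            (by rw [hfh x]; exact lt_of_le_of_lt (hhle x hx.1.le) hh0r₀)
          rw [hfh x] at hglb
          have hkey : K * h x ≤ ‖gradient f (θ x)‖ ^ 2 := by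
            rw [hKdef, div_mul_eq_mul_div, div_le_iff₀ (by positivity : (0:ℝ) < c ^ 2)]
            have h0le : (0:ℝ) ≤ σ₀ * σF * Real.sqrt (h x) :=
              mul_nonneg hσσ.le (Real.sqrt_nonneg _)
            have hsq := mul_self_le_mul_self h0le hglb
            have hss := Real.mul_self_sqrt (hLpos' x)
            nlinarith [hsq, hss]
          nlinarith [mul_le_mul_of_nonneg_right hkey (Real.exp_pos (K * x)).le]
      have hfin := hanti (Set.mem_Icc.2 ⟨le_rfl, ht⟩) (Set.mem_Icc.2 ⟨ht, le_rfl⟩) ht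
      simp only [mul_zero, Real.exp_zero, mul_one] at hfin
      rw [Real.exp_neg, ← div_eq_mul_inv, le_div_iff₀ (Real.exp_pos _)]
      exact hfin
  -- decay of sqrt h
  have hsqdecay : ∀ t, 0 ≤ t →
      Real.sqrt (h t) ≤ Real.sqrt (h 0) * Real.exp (-(K / 2) * t) := by
    intro t ht
    have h1 := Real.sqrt_le_sqrt (hEXP t ht)
    rw [Real.sqrt_mul (hLpos' 0)] at h1
    refine h1.trans_eq ?_
    congr 1
    rw [← Real.exp_half]
    congr 1
    ring
  -- distance estimate
  have hdistle : ∀ a b : ℝ, 0 ≤ a → a ≤ b → dist (θ b) (θ a) ≤ M * Real.sqrt (h a) := by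
    intro a b ha hab
    have h1 := hCORE a b ha hab fun s h1 h2 => (hSTAY s (le_trans ha h1)).trans hR'R.le
    rw [dist_eq_norm]
    refine h1.trans ?_
    have := Real.sqrt_nonneg (h b)
    nlinarith [hMpos]
  -- Cauchy sequence and limit
  have hcs : CauchySeq (fun k : ℕ => θ k) := by
    apply cauchySeq_of_le_tendsto_0
      (fun N : ℕ => 2 * (M * (Real.sqrt (h 0) * Real.exp (-(K / 2) * N))))
    · intro k l N hk hl
      have hN0 : (0:ℝ) ≤ (N:ℝ) := Nat.cast_nonneg N
      have e1 : dist (θ k) (θ l) ≤ dist (θ N) (θ k) + dist (θ N) (θ l) :=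
        dist_triangle_left _ _ _
      have e2 : dist (θ (k:ℝ)) (θ (N:ℝ)) ≤ M * Real.sqrt (h N) :=
        hdistle N k hN0 (Nat.cast_le.2 hk)
      have e3 : dist (θ (l:ℝ)) (θ (N:ℝ)) ≤ M * Real.sqrt (h N) :=
        hdistle N l hN0 (Nat.cast_le.2 hl)
      have e4 : M * Real.sqrt (h N) ≤ M * (Real.sqrt (h 0) * Real.exp (-(K / 2) * N)) :=
        mul_le_mul_of_nonneg_left (hsqdecay N hN0) hMpos.le
      rw [dist_comm] at e2
      rw [dist_comm] at e3
      linarith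
    · have e5 : ∀ N : ℕ, 2 * (M * (Real.sqrt (h 0) * Real.exp (-(K / 2) * N)))
          = (2 * (M * Real.sqrt (h 0))) * (Real.exp (-(K / 2))) ^ N := by
        intro N
        rw [← Real.exp_nat_mul, mul_comm ((N:ℝ)) (-(K / 2))]
        ring
      simp only [e5]
      have hlt1 : Real.exp (-(K / 2)) < 1 :=
        Real.exp_lt_one_iff.2 (by linarith)
      simpa using
        (tendsto_pow_atTop_nhds_zero_of_lt_one (Real.exp_nonneg _) hlt1).const_mul
          (2 * (M * Real.sqrt (h 0)))
  obtain ⟨θlim, hθlim⟩ := cauchySeq_tendsto_of_complete hcs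
  have hfinal : ∀ t, 0 ≤ t → dist (θ t) θlim ≤ M * Real.sqrt (h t) := by
    intro t ht
    have h1 : Tendsto (fun N : ℕ => dist (θ t) (θ N)) atTop (𝓝 (dist (θ t) θlim)) :=
      tendsto_const_nhds.dist hθlim
    apply le_of_tendsto h1
    filter_upwards [eventually_ge_atTop (Nat.ceil t)] with N hN
    have htN : t ≤ (N:ℝ) := (Nat.le_ceil t).trans (Nat.cast_le.2 hN)
    rw [dist_comm]
    exact hdistle t N ht htN
  have htendsto : Tendsto θ atTop (𝓝 θlim) := by
    rw [tendsto_iff_dist_tendsto_zero]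
    apply squeeze_zero' (Filter.Eventually.of_forall fun t => dist_nonneg)
    · filter_upwards [eventually_ge_atTop (0:ℝ)] with t ht
      exact (hfinal t ht).trans (mul_le_mul_of_nonneg_left (hsqdecay t ht) hMpos.le)
    · have h2 : Tendsto (fun t : ℝ => -(K / 2) * t) atTop atBot :=
        (tendsto_const_mul_atBot_of_neg (by linarith : -(K / 2) < 0)).2 tendsto_id
      have h3 : Tendsto (fun t : ℝ => Real.exp (-(K / 2) * t)) atTop (𝓝 0) :=
        Real.tendsto_exp_atBot.comp h2
      simpa using (h3.const_mul (Real.sqrt (h 0))).const_mul M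
  refine ⟨θlim, htendsto, fun t ht => ⟨?_, ?_⟩⟩
  · rw [neg_mul, ← heq t, ← heq 0]
    exact hEXP t ht
  · rw [← heq 0]
    have e2 : -(σF ^ 2 * σ₀ ^ 2 / (2 * c ^ 2)) * t = -(K / 2) * t := by
      rw [hKdef]; ring
    rw [e2, ← dist_eq_norm]
    calc dist (θ t) θlim ≤ M * Real.sqrt (h t) := hfinal t ht
      _ ≤ M * (Real.sqrt (h 0) * Real.exp (-(K / 2) * t)) :=
          mul_le_mul_of_nonneg_left (hsqdecay t ht) hMpos.le
      _ = M * Real.sqrt (h 0) * Real.exp (-(K / 2) * t) := by ring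
end

section
/- Suppose the KL assumption holds with the Łojasiewicz desingularizing function ψ(s) = c·s^α for some c > 0 and α ∈ (0, 1/2), and L(y(0)) > 0. Set γ(t) := (σ_F²·σ₀²/4)·t + (c²α²/(1−2α))·L(y(0))^{2α−1}, so γ(t) > 0 for all t ≥ 0. Then for all t ≥ 0: L(y(t)) ≤ (((1−2α)/(α²c²))·γ(t))^{−1/(1−2α)}, and, with θ∞ := lim_{t→∞} θ(t), ‖θ(t) − θ∞‖ ≤ (2c/(σ₀·σ_F))·(((1−2α)/(α²c²))·γ(t))^{−α/(1−2α)}. -/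
open Filter MeasureTheory ProbabilityTheory
open scoped Topology NNReal

section Aux
open InnerProductSpace

variable {E₁ E₂ E₃ : Type*}
  [NormedAddCommGroup E₁] [InnerProductSpace ℝ E₁] [CompleteSpace E₁]
  [NormedAddCommGroup E₂] [InnerProductSpace ℝ E₂] [CompleteSpace E₂]
  [NormedAddCommGroup E₃] [InnerProductSpace ℝ E₃] [CompleteSpace E₃]

lemma grad_inner (f : E₁ → ℝ) (q v : E₁) :
    ⟪gradient f q, v⟫_ℝ = fderiv ℝ f q v := by
  rw [gradient, InnerProductSpace.toDual_symm_apply]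

lemma grad_comp (L : E₃ → ℝ) (F : E₂ → E₃) (g : E₁ → E₂)
    (hL : ContDiff ℝ 1 L) (hF : ContDiff ℝ 1 F) (hg : ContDiff ℝ 1 g) (q : E₁) :
    gradient (fun q => L (F (g q))) q =
      ContinuousLinearMap.adjoint (fderiv ℝ g q)
        (ContinuousLinearMap.adjoint (fderiv ℝ F (g q)) (gradient L (F (g q)))) := by
  have hdg : DifferentiableAt ℝ g q := (hg.differentiable one_ne_zero).differentiableAt
  have hdF : DifferentiableAt ℝ F (g q) := (hF.differentiable one_ne_zero).differentiableAt
  have hdL : DifferentiableAt ℝ L (F (g q)) := (hL.differentiable one_ne_zero).differentiableAt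
  have hfd : fderiv ℝ (fun q => L (F (g q))) q
      = ((fderiv ℝ L (F (g q))).comp ((fderiv ℝ F (g q)).comp (fderiv ℝ g q))) := by
    have h1 : fderiv ℝ (L ∘ F ∘ g) q = (fderiv ℝ (L ∘ F) (g q)).comp (fderiv ℝ g q) :=
      fderiv_comp q (hdL.comp _ hdF) hdg
    have h2 : fderiv ℝ (L ∘ F) (g q) = (fderiv ℝ L (F (g q))).comp (fderiv ℝ F (g q)) :=
      fderiv_comp (g q) hdL hdF
    calc fderiv ℝ (fun q => L (F (g q))) q = fderiv ℝ (L ∘ F ∘ g) q := rfl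
    _ = _ := by rw [h1, h2]; rfl
  apply ext_inner_right ℝ
  intro v
  rw [grad_inner, hfd, ContinuousLinearMap.adjoint_inner_left,
    ContinuousLinearMap.adjoint_inner_left, grad_inner]
  rfl

lemma sigmaMin_mul_le_s10 (A : E₁ →L[ℝ] E₂) (w : E₂) :
    sigmaMin A * ‖w‖ ≤ ‖ContinuousLinearMap.adjoint A w‖ := by
  rcases eq_or_ne w 0 with rfl | hw
  · simp
  · have hnw : ‖w‖ ≠ 0 := norm_ne_zero_iff.mpr hw
    have hunit : ‖‖w‖⁻¹ • w‖ = 1 := by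
      rw [norm_smul, norm_inv, norm_norm, inv_mul_cancel₀ hnw]
    have hle : sigmaMin A ≤ ‖ContinuousLinearMap.adjoint A (‖w‖⁻¹ • w)‖ := by
      apply ciInf_le ⟨0, ?_⟩ (⟨_, hunit⟩ : {w : E₂ // ‖w‖ = 1})
      rintro x ⟨i, rfl⟩
      exact norm_nonneg _
    have heq : ‖ContinuousLinearMap.adjoint A (‖w‖⁻¹ • w)‖
        = ‖w‖⁻¹ * ‖ContinuousLinearMap.adjoint A w‖ := by
      rw [_root_.map_smul, norm_smul, norm_inv, norm_norm]
    rw [heq] at hle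
    have hpos : (0:ℝ) < ‖w‖ := lt_of_le_of_ne (norm_nonneg _) (Ne.symm hnw)
    calc sigmaMin A * ‖w‖ ≤ (‖w‖⁻¹ * ‖ContinuousLinearMap.adjoint A w‖) * ‖w‖ :=
          mul_le_mul_of_nonneg_right hle (norm_nonneg _)
    _ = ‖ContinuousLinearMap.adjoint A w‖ := by field_simp

lemma adjoint_sub_norm (A B : E₁ →L[ℝ] E₂) (w : E₂) :
    ‖ContinuousLinearMap.adjoint A w - ContinuousLinearMap.adjoint B w‖ ≤ ‖A - B‖ * ‖w‖ := by
  have h1 : ContinuousLinearMap.adjoint A w - ContinuousLinearMap.adjoint B w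
      = ContinuousLinearMap.adjoint (A - B) w := by rw [_root_.map_sub]; rfl
  rw [h1]
  calc ‖ContinuousLinearMap.adjoint (A - B) w‖ ≤ ‖ContinuousLinearMap.adjoint (A-B)‖ * ‖w‖ :=
        ContinuousLinearMap.le_opNorm _ w
  _ = ‖A - B‖ * ‖w‖ := by rw [LinearIsometryEquiv.norm_map]

end Aux

set_option maxHeartbeats 1000000 in
theorem stmt10
    {n m p : ℕ} (hn : 0 < n) (hm : 0 < m) (hp : 0 < p)
    (L : EuclideanSpace ℝ (Fin m) → ℝ)
    (F : EuclideanSpace ℝ (Fin n) → EuclideanSpace ℝ (Fin m))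
    (g : EuclideanSpace ℝ (Fin p) → EuclideanSpace ℝ (Fin n))
    (hL : ContDiff ℝ 1 L)
    (hLnonneg : ∀ v, 0 ≤ L v) (hLmin : ∃ v, L v = 0)
    (hLgrad : ∀ s : Set (EuclideanSpace ℝ (Fin m)), Bornology.IsBounded s →
      ∃ K : ℝ≥0, LipschitzOnWith K (fun v => gradient L v) s)
    (hF : ContDiff ℝ 1 F)
    (hJF : ∀ s : Set (EuclideanSpace ℝ (Fin n)), Bornology.IsBounded s →
      ∃ K : ℝ≥0, LipschitzOnWith K (fun x => fderiv ℝ F x) s)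
    (hg : ContDiff ℝ 1 g)
    (hJg : ∀ s : Set (EuclideanSpace ℝ (Fin p)), Bornology.IsBounded s →
      ∃ K : ℝ≥0, LipschitzOnWith K (fun q => fderiv ℝ g q) s)
    (θ θ' : ℝ → EuclideanSpace ℝ (Fin p)) (θ₀ : EuclideanSpace ℝ (Fin p))
    (hθ0 : θ 0 = θ₀)
    (hθd : ∀ t ≥ (0:ℝ), HasDerivAt θ (θ' t) t)
    (hθcont : ContinuousOn θ' (Set.Ici 0))
    (hflow : ∀ t ≥ (0:ℝ), θ' t = -gradient (fun q => L (F (g q))) (θ t))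
    (c α : ℝ) (hc : 0 < c) (hα : α ∈ Set.Ioo (0:ℝ) (1/2))
    (r₀ : ℝ) (hr₀ : L (F (g (θ 0))) < r₀)
    (hKL : ∀ v : EuclideanSpace ℝ (Fin m), 0 < L v → L v < r₀ →
      1 ≤ c * α * L v ^ (α - 1) * ‖gradient L v‖)
    (σF : ℝ) (hσF : 0 < σF)
    (σ₀ : ℝ) (hσ₀ : σ₀ = sigmaMin (fderiv ℝ g θ₀)) (hσ₀pos : 0 < σ₀)
    (R : ℝ) (hRpos : 0 < R)
    (hinj : ∀ q ∈ Metric.closedBall θ₀ R,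
      gradient L (F (g q)) ∈ LinearMap.range (fderiv ℝ F (g q) : EuclideanSpace ℝ (Fin n) →ₗ[ℝ] EuclideanSpace ℝ (Fin m)) ∧
      ∀ z ∈ LinearMap.range (fderiv ℝ F (g q) : EuclideanSpace ℝ (Fin n) →ₗ[ℝ] EuclideanSpace ℝ (Fin m)),
        σF * ‖z‖ ≤ ‖ContinuousLinearMap.adjoint (fderiv ℝ F (g q)) z‖)
    (hLip : ∀ a ∈ Metric.closedBall θ₀ R, ∀ b ∈ Metric.closedBall θ₀ R,
      ‖fderiv ℝ g a - fderiv ℝ g b‖ ≤ σ₀ / (2 * R) * ‖a - b‖)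
    (hRR : 2 / (σF * σ₀) * (c * L (F (g θ₀)) ^ α) < R)
    (hL0pos : 0 < L (F (g (θ 0))))
    (γ : ℝ → ℝ)
    (hγ : ∀ t, γ t = σF ^ 2 * σ₀ ^ 2 / 4 * t +
      c ^ 2 * α ^ 2 / (1 - 2 * α) * L (F (g (θ 0))) ^ (2 * α - 1)) :
    (∀ t ≥ (0:ℝ), 0 < γ t) ∧
    ∃ θlim : EuclideanSpace ℝ (Fin p), Tendsto θ atTop (𝓝 θlim) ∧
      ∀ t ≥ (0:ℝ),
        L (F (g (θ t))) ≤ ((1 - 2 * α) / (α ^ 2 * c ^ 2) * γ t) ^ (-(1 / (1 - 2 * α))) ∧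
        ‖θ t - θlim‖ ≤ 2 * c / (σ₀ * σF) *
          ((1 - 2 * α) / (α ^ 2 * c ^ 2) * γ t) ^ (-(α / (1 - 2 * α))) := by
  classical
  obtain ⟨hα0, hαh⟩ := hα
  have h2α : 0 < 1 - 2 * α := by linarith
  -- abbreviations
  set f : EuclideanSpace ℝ (Fin p) → ℝ := fun q => L (F (g q)) with hfdef
  set h : ℝ → ℝ := fun t => f (θ t) with hhdef
  set K : ℝ := 2 * c / (σ₀ * σF) with hKdef
  set Φ : ℝ → ℝ := fun t => K * h t ^ α with hΦdef
  set M : ℝ := σF ^ 2 * σ₀ ^ 2 / (4 * c ^ 2 * α ^ 2) with hMdef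
  have hKpos : 0 < K := by positivity
  have hMpos : 0 < M := by positivity
  have hγpos : ∀ t ≥ (0:ℝ), 0 < γ t := by
    intro t ht
    rw [hγ]
    have hb : 0 < c ^ 2 * α ^ 2 / (1 - 2 * α) * L (F (g (θ 0))) ^ (2 * α - 1) :=
      mul_pos (div_pos (by positivity) h2α) (Real.rpow_pos_of_pos hL0pos _)
    have ha : 0 ≤ σF ^ 2 * σ₀ ^ 2 / 4 * t := by positivity
    linarith
  -- differentiability
  have hfC : ContDiff ℝ 1 f := hL.comp (hF.comp hg)
  have hfdiff : ∀ q, DifferentiableAt ℝ f q := fun q => (hfC.differentiable one_ne_zero).differentiableAt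
  have hgradf : ∀ q, gradient f q =
      ContinuousLinearMap.adjoint (fderiv ℝ g q)
        (ContinuousLinearMap.adjoint (fderiv ℝ F (g q)) (gradient L (F (g q)))) :=
    fun q => grad_comp L F g hL hF hg q
  have hnn : ∀ t, 0 ≤ h t := fun t => hLnonneg _
  -- derivative of h
  have hderiv : ∀ t, 0 ≤ t → HasDerivAt h (-‖gradient f (θ t)‖ ^ 2) t := by
    intro t ht
    have H1 : HasDerivAt h (fderiv ℝ f (θ t) (θ' t)) t :=
      (hfdiff (θ t)).hasFDerivAt.comp_hasDerivAt t (hθd t ht)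
    convert H1 using 1
    rw [hflow t ht, map_neg, ← grad_inner, real_inner_self_eq_norm_sq]
  have hhcont : ∀ t, 0 ≤ t → ContinuousAt h t :=
    fun t ht => (hderiv t ht).differentiableAt.continuousAt
  have hθcontAt : ∀ t, 0 ≤ t → ContinuousAt θ t := fun t ht => (hθd t ht).continuousAt
  -- h antitone
  have hanti : AntitoneOn h (Set.Ici 0) := by
    apply antitoneOn_of_deriv_nonpos (convex_Ici 0)
    · exact fun t ht => (hhcont t ht).continuousWithinAt
    · intro t ht
      rw [interior_Ici] at ht
      exact (hderiv t (le_of_lt ht)).differentiableAt.differentiableWithinAt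
    · intro t ht
      rw [interior_Ici] at ht
      rw [(hderiv t (le_of_lt ht)).deriv]
      exact neg_nonpos_of_nonneg (by positivity)
  have hhr : ∀ t, 0 ≤ t → h t < r₀ := by
    intro t ht
    calc h t ≤ h 0 := hanti (Set.self_mem_Ici) ht ht
    _ < r₀ := hr₀
  -- adjoint lower bound on ball
  have hlow : ∀ q ∈ Metric.closedBall θ₀ R, ∀ w,
      σ₀ / 2 * ‖w‖ ≤ ‖ContinuousLinearMap.adjoint (fderiv ℝ g q) w‖ := by
    intro q hq w
    have h0 : σ₀ * ‖w‖ ≤ ‖ContinuousLinearMap.adjoint (fderiv ℝ g θ₀) w‖ := by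
      rw [hσ₀]; exact sigmaMin_mul_le_s10 _ w
    have h1 := adjoint_sub_norm (fderiv ℝ g θ₀) (fderiv ℝ g q) w
    have h3 : ‖θ₀ - q‖ ≤ R := by
      rw [← dist_eq_norm, dist_comm]
      exact Metric.mem_closedBall.mp hq
    have h2 : ‖fderiv ℝ g θ₀ - fderiv ℝ g q‖ ≤ σ₀ / 2 := by
      calc ‖fderiv ℝ g θ₀ - fderiv ℝ g q‖ ≤ σ₀ / (2 * R) * ‖θ₀ - q‖ :=
            hLip θ₀ (Metric.mem_closedBall_self hRpos.le) q hq
      _ ≤ σ₀ / (2 * R) * R := mul_le_mul_of_nonneg_left h3 (by positivity)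
      _ = σ₀ / 2 := by field_simp
    have h4 : ‖fderiv ℝ g θ₀ - fderiv ℝ g q‖ * ‖w‖ ≤ σ₀ / 2 * ‖w‖ :=
      mul_le_mul_of_nonneg_right h2 (norm_nonneg _)
    have h5 := norm_sub_norm_le (ContinuousLinearMap.adjoint (fderiv ℝ g θ₀) w)
      (ContinuousLinearMap.adjoint (fderiv ℝ g q) w)
    have : σ₀ / 2 * ‖w‖ + σ₀ / 2 * ‖w‖ = σ₀ * ‖w‖ := by ring
    linarith
  -- gradient norm lower bound
  have hgradlow : ∀ t, 0 ≤ t → θ t ∈ Metric.closedBall θ₀ R →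
      σ₀ * σF / 2 * ‖gradient L (F (g (θ t)))‖ ≤ ‖gradient f (θ t)‖ := by
    intro t ht hball
    obtain ⟨hrange, hFinj⟩ := hinj (θ t) hball
    rw [hgradf]
    calc σ₀ * σF / 2 * ‖gradient L (F (g (θ t)))‖
        = σ₀ / 2 * (σF * ‖gradient L (F (g (θ t)))‖) := by ring
    _ ≤ σ₀ / 2 * ‖ContinuousLinearMap.adjoint (fderiv ℝ F (g (θ t)))
          (gradient L (F (g (θ t))))‖ :=
        mul_le_mul_of_nonneg_left (hFinj _ hrange) (by positivity)
    _ ≤ _ := hlow (θ t) hball _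
  -- main pointwise estimate from KL
  have hE : ∀ t, 0 ≤ t → θ t ∈ Metric.closedBall θ₀ R → 0 < h t →
      h t ^ (1 - α) ≤ 2 * c * α / (σ₀ * σF) * ‖gradient f (θ t)‖ := by
    intro t ht hball hpos
    have hKL1 := hKL (F (g (θ t))) hpos (hhr t ht)
    have hcancel : h t ^ (α - 1) * h t ^ (1 - α) = 1 := by
      rw [← Real.rpow_add hpos]; norm_num
    have hL1 : h t ^ (1 - α) ≤ c * α * ‖gradient L (F (g (θ t)))‖ := by
      have := mul_le_mul_of_nonneg_right hKL1 (Real.rpow_nonneg (hnn t) (1 - α))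
      rw [one_mul] at this
      calc h t ^ (1 - α) ≤ c * α * h t ^ (α - 1) * ‖gradient L (F (g (θ t)))‖ * h t ^ (1-α) := this
      _ = c * α * ‖gradient L (F (g (θ t)))‖ * (h t ^ (α - 1) * h t ^ (1 - α)) := by ring
      _ = c * α * ‖gradient L (F (g (θ t)))‖ := by rw [hcancel, mul_one]
    have hL2 := hgradlow t ht hball
    have hcα : 0 < c * α := by positivity
    calc h t ^ (1 - α) ≤ c * α * ‖gradient L (F (g (θ t)))‖ := hL1
    _ = 2 * c * α / (σ₀ * σF) * (σ₀ * σF / 2 * ‖gradient L (F (g (θ t)))‖) := by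
        field_simp
    _ ≤ 2 * c * α / (σ₀ * σF) * ‖gradient f (θ t)‖ :=
        mul_le_mul_of_nonneg_left hL2 (by positivity)
  -- consequence (i): for the length estimate
  have hI : ∀ t, 0 ≤ t → θ t ∈ Metric.closedBall θ₀ R → 0 < h t →
      ‖gradient f (θ t)‖ ≤ K * α * h t ^ (α - 1) * ‖gradient f (θ t)‖ ^ 2 := by
    intro t ht hball hpos
    have hE1 := hE t ht hball hpos
    have hcancel : h t ^ (1 - α) * h t ^ (α - 1) = 1 := by
      rw [← Real.rpow_add hpos]; norm_num
    have hfac : 0 ≤ h t ^ (α - 1) * ‖gradient f (θ t)‖ := by positivity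
    have := mul_le_mul_of_nonneg_right hE1 hfac
    calc ‖gradient f (θ t)‖
        = h t ^ (1 - α) * (h t ^ (α - 1) * ‖gradient f (θ t)‖) := by
          rw [← mul_assoc, hcancel, one_mul]
    _ ≤ 2 * c * α / (σ₀ * σF) * ‖gradient f (θ t)‖ *
          (h t ^ (α - 1) * ‖gradient f (θ t)‖) := this
    _ = K * α * h t ^ (α - 1) * ‖gradient f (θ t)‖ ^ 2 := by rw [hKdef]; ring
  -- consequence (ii): for the value estimate
  have hII : ∀ t, 0 ≤ t → θ t ∈ Metric.closedBall θ₀ R → 0 < h t →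
      M ≤ h t ^ (2 * α - 2) * ‖gradient f (θ t)‖ ^ 2 := by
    intro t ht hball hpos
    have hE1 := hE t ht hball hpos
    set C : ℝ := 2 * c * α / (σ₀ * σF) with hCdef
    have hC : 0 < C := by positivity
    have hsq : (h t ^ (1 - α)) ^ 2 ≤ C ^ 2 * ‖gradient f (θ t)‖ ^ 2 := by
      rw [← mul_pow]
      exact pow_le_pow_left₀ (Real.rpow_nonneg (hnn t) _) hE1 2
    have h22 : h t ^ (2 * α - 2) * (h t ^ (1 - α)) ^ 2 = 1 := by
      rw [← Real.rpow_natCast (h t ^ (1 - α)) 2, ← Real.rpow_mul (hnn t), ← Real.rpow_add hpos]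
      norm_num
      rw [show 2 * α - 2 + (1 - α) * 2 = 0 by ring, Real.rpow_zero]
    have hfac : (0:ℝ) ≤ h t ^ (2 * α - 2) := Real.rpow_nonneg (hnn t) _
    have hmul := mul_le_mul_of_nonneg_left hsq hfac
    rw [h22] at hmul
    have hMC : M = 1 / C ^ 2 := by rw [hMdef, hCdef]; field_simp; ring
    rw [hMC, div_le_iff₀ (by positivity : (0:ℝ) < C ^ 2)]
    calc (1:ℝ) ≤ h t ^ (2*α-2) * (C ^ 2 * ‖gradient f (θ t)‖ ^ 2) := hmul
    _ = h t ^ (2 * α - 2) * ‖gradient f (θ t)‖ ^ 2 * C ^ 2 := by ring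
  -- nonnegativity and continuity of Φ
  have hΦnn : ∀ t, 0 ≤ Φ t := fun t => mul_nonneg hKpos.le (Real.rpow_nonneg (hnn t) α)
  have hΦcont : ∀ s, 0 ≤ s → ContinuousAt Φ s := by
    intro s hs
    have hr : ContinuousAt (fun x : ℝ => x ^ α) (h s) :=
      Real.continuousAt_rpow_const _ _ (Or.inr hα0.le)
    exact continuousAt_const.mul (hr.comp (hhcont s hs))
  -- length estimate, positive case
  have hLEpos : ∀ a b : ℝ, 0 ≤ a → a ≤ b →
      (∀ s ∈ Set.Icc a b, θ s ∈ Metric.closedBall θ₀ R) → 0 < h b →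
      ∀ x ∈ Set.Icc a b, ‖θ x - θ a‖ ≤ Φ a - Φ x := by
    intro a b ha hab hball hb
    have hposall : ∀ s ∈ Set.Icc a b, 0 < h s := fun s hs =>
      lt_of_lt_of_le hb (hanti (Set.mem_Ici.mpr (le_trans ha hs.1)) (Set.mem_Ici.mpr (le_trans ha hab)) hs.2)
    have key := image_norm_le_of_norm_deriv_right_le_deriv_boundary'
      (f := fun s => θ s - θ a) (f' := θ') (a := a) (b := b)
      (B := fun s => Φ a - Φ s)
      (B' := fun s => K * α * h s ^ (α - 1) * ‖gradient f (θ s)‖ ^ 2)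
      ?_ ?_ ?_ ?_ ?_ ?_
    · intro x hx
      have := key hx
      simpa using this
    · exact fun s hs => ((hθcontAt s (le_trans ha hs.1)).sub continuousAt_const).continuousWithinAt
    · exact fun x hx => ((hθd x (le_trans ha hx.1)).sub_const _).hasDerivWithinAt
    · simp
    · exact fun s hs => (continuousAt_const.sub (hΦcont s (le_trans ha hs.1))).continuousWithinAt
    · intro x hx
      have hx0 : (0:ℝ) ≤ x := le_trans ha hx.1
      have hxI : x ∈ Set.Icc a b := ⟨hx.1, hx.2.le⟩
      have hd : HasDerivAt (fun s => Φ a - Φ s)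
          (-(K * ((-‖gradient f (θ x)‖ ^ 2) * α * h x ^ (α - 1)))) x := by
        exact ((((hderiv x hx0).rpow_const (Or.inl (ne_of_gt (hposall x hxI)))).const_mul K).const_sub (Φ a))
      have heq : -(K * ((-‖gradient f (θ x)‖ ^ 2) * α * h x ^ (α - 1)))
          = K * α * h x ^ (α - 1) * ‖gradient f (θ x)‖ ^ 2 := by ring
      rw [heq] at hd
      exact hd.hasDerivWithinAt
    · intro x hx
      have hx0 : (0:ℝ) ≤ x := le_trans ha hx.1
      have hxI : x ∈ Set.Icc a b := ⟨hx.1, hx.2.le⟩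
      rw [hflow x hx0, norm_neg]
      exact hI x hx0 (hball x hxI) (hposall x hxI)
  -- length estimate, general case
  have hLE : ∀ a b : ℝ, 0 ≤ a → a ≤ b →
      (∀ s ∈ Set.Icc a b, θ s ∈ Metric.closedBall θ₀ R) →
      ‖θ b - θ a‖ ≤ Φ a - Φ b := by
    intro a b ha hab hball
    rcases (hnn b).lt_or_eq with hb | hb
    · exact hLEpos a b ha hab hball hb b ⟨hab, le_rfl⟩
    · have hb0 : h b = 0 := hb.symm
      have hΦb : Φ b = 0 := by
        show K * h b ^ α = 0
        rw [hb0, Real.zero_rpow (ne_of_gt hα0), mul_zero]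
      have hhcontOn : ContinuousOn h (Set.Icc a b) :=
        fun s hs => (hhcont s (le_trans ha hs.1)).continuousWithinAt
      have hScl : IsClosed (Set.Icc a b ∩ h ⁻¹' {0}) :=
        hhcontOn.preimage_isClosed_of_isClosed isClosed_Icc isClosed_singleton
      have hSne : (Set.Icc a b ∩ h ⁻¹' {0}).Nonempty := ⟨b, ⟨hab, le_rfl⟩, hb0⟩
      have hSbdd : BddBelow (Set.Icc a b ∩ h ⁻¹' {0}) := ⟨a, fun x hx => hx.1.1⟩
      obtain ⟨⟨haT, hTb⟩, hTzero⟩ := hScl.csInf_mem hSne hSbdd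
      set T := sInf (Set.Icc a b ∩ h ⁻¹' {0}) with hTdef
      have hTzero' : h T = 0 := hTzero
      have hT0 : (0:ℝ) ≤ T := le_trans ha haT
      have hzero : ∀ s, 0 ≤ s → h s = 0 → θ' s = 0 := by
        intro s hs h0
        have hmin : IsLocalMin L (F (g (θ s))) := by
          apply Filter.Eventually.of_forall
          intro v
          rw [show L (F (g (θ s))) = 0 from h0]
          exact hLnonneg v
        have hgrad0 : gradient L (F (g (θ s))) = 0 := by
          rw [gradient, hmin.fderiv_eq_zero]
          simp
        rw [hflow s hs, hgradf, hgrad0, map_zero, map_zero, neg_zero]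
      have hconst : θ b = θ T := by
        have hd : ∀ x ∈ Set.Icc T b, HasDerivWithinAt θ (θ' x) (Set.Icc T b) x :=
          fun x hx => (hθd x (le_trans hT0 hx.1)).hasDerivWithinAt
        have hbd : ∀ x ∈ Set.Ico T b, ‖θ' x‖ ≤ 0 := by
          intro x hx
          have hx0 : (0:ℝ) ≤ x := le_trans hT0 hx.1
          have hxz : h x = 0 := le_antisymm
            (by calc h x ≤ h T := hanti (Set.mem_Ici.mpr hT0) (Set.mem_Ici.mpr hx0) hx.1
                _ = 0 := hTzero')
            (hnn x)
          rw [hzero x hx0 hxz, norm_zero]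
        have := norm_image_sub_le_of_norm_deriv_le_segment' hd hbd b ⟨hTb, le_rfl⟩
        simpa [sub_eq_zero] using this
      rcases eq_or_lt_of_le haT with heq | haT'
      · have hΦa : Φ a = 0 := by
          show K * h a ^ α = 0
          rw [show h a = 0 by rw [heq]; exact hTzero', Real.zero_rpow (ne_of_gt hα0), mul_zero]
        rw [hconst, ← heq, sub_self, norm_zero, hΦa, hΦb]
        norm_num
      · have hlim : ∀ u ∈ Set.Ico a T, ‖θ u - θ a‖ ≤ Φ a - Φ u := by
          intro u hu
          have hu_pos : 0 < h u := by
            rcases (hnn u).lt_or_eq with h' | h'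
            · exact h'
            · exfalso
              have hmem : u ∈ Set.Icc a b ∩ h ⁻¹' {0} := ⟨⟨hu.1, le_trans hu.2.le hTb⟩, h'.symm⟩
              exact absurd (csInf_le hSbdd hmem) (not_le.mpr hu.2)
          exact hLEpos a u ha hu.1
            (fun s hs => hball s ⟨hs.1, le_trans hs.2 (le_trans hu.2.le hTb)⟩) hu_pos u ⟨hu.1, le_rfl⟩
        have h1 : Tendsto (fun u => ‖θ u - θ a‖) (𝓝[<] T) (𝓝 ‖θ T - θ a‖) :=
          (((hθcontAt T hT0).sub continuousAt_const).norm.tendsto).mono_left nhdsWithin_le_nhds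
        have h2 : Tendsto (fun u => Φ a - Φ u) (𝓝[<] T) (𝓝 (Φ a - Φ T)) :=
          ((continuousAt_const.sub (hΦcont T hT0)).tendsto).mono_left nhdsWithin_le_nhds
        have hev : ∀ᶠ u in 𝓝[<] T, ‖θ u - θ a‖ ≤ Φ a - Φ u := by
          filter_upwards [Ioo_mem_nhdsLT haT'] with u hu
          exact hlim u ⟨hu.1.le, hu.2⟩
        have hTlim : ‖θ T - θ a‖ ≤ Φ a - Φ T := le_of_tendsto_of_tendsto h1 h2 hev
        have hΦT : Φ T = 0 := by
          show K * h T ^ α = 0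
          rw [hTzero', Real.zero_rpow (ne_of_gt hα0), mul_zero]
        rw [hconst, hΦb]
        rw [hΦT] at hTlim
        linarith
  -- bootstrap: the trajectory stays in the small ball
  have hΦ0R : Φ 0 < R := by
    have : Φ 0 = 2 / (σF * σ₀) * (c * L (F (g θ₀)) ^ α) := by
      show K * h 0 ^ α = _
      have : h 0 = L (F (g θ₀)) := by show f (θ 0) = _; rw [hθ0]
      rw [this, hKdef]
      ring
    rw [this]
    exact hRR
  have hboot : ∀ t, 0 ≤ t → ‖θ t - θ₀‖ ≤ Φ 0 := by
    have hvcont : ContinuousOn (fun s => ‖θ s - θ₀‖) (Set.Ici 0) :=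
      fun s hs => ((hθcontAt s hs).sub continuousAt_const).norm.continuousWithinAt
    have hBcl : IsClosed (Set.Ici 0 ∩ (fun s => ‖θ s - θ₀‖) ⁻¹' Set.Ici R) :=
      hvcont.preimage_isClosed_of_isClosed isClosed_Ici isClosed_Ici
    have hBempty : Set.Ici 0 ∩ (fun s => ‖θ s - θ₀‖) ⁻¹' Set.Ici R = ∅ := by
      by_contra hne
      have hBne := Set.nonempty_iff_ne_empty.mpr hne
      have hSbdd : BddBelow (Set.Ici 0 ∩ (fun s => ‖θ s - θ₀‖) ⁻¹' Set.Ici R) :=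
        ⟨0, fun x hx => hx.1⟩
      obtain ⟨hT0, hTR⟩ := hBcl.csInf_mem hBne hSbdd
      set T := sInf (Set.Ici 0 ∩ (fun s => ‖θ s - θ₀‖) ⁻¹' Set.Ici R) with hTdef
      have hT0' : (0:ℝ) ≤ T := hT0
      have hTR' : R ≤ ‖θ T - θ₀‖ := hTR
      have hTpos : 0 < T := by
        rcases eq_or_lt_of_le hT0' with heq | h'
        · exfalso
          rw [← heq, hθ0, sub_self, norm_zero] at hTR'
          linarith
        · exact h'
      have hsmall : ∀ s ∈ Set.Ico 0 T, ‖θ s - θ₀‖ ≤ Φ 0 := by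
        intro s hs
        have hball : ∀ u ∈ Set.Icc 0 s, θ u ∈ Metric.closedBall θ₀ R := by
          intro u hu
          have hnotmem : u ∉ Set.Ici 0 ∩ (fun s => ‖θ s - θ₀‖) ⁻¹' Set.Ici R := by
            intro hmem
            exact absurd (csInf_le hSbdd hmem) (not_le.mpr (lt_of_le_of_lt hu.2 hs.2))
          rw [Metric.mem_closedBall, dist_eq_norm]
          by_contra hcon
          push_neg at hcon
          exact hnotmem ⟨hu.1, le_of_lt hcon⟩
        have := hLE 0 s le_rfl hs.1 hball
        rw [hθ0] at this
        linarith [hΦnn s]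
      have h1 : Tendsto (fun u => ‖θ u - θ₀‖) (𝓝[<] T) (𝓝 ‖θ T - θ₀‖) :=
        (((hθcontAt T hT0').sub continuousAt_const).norm.tendsto).mono_left nhdsWithin_le_nhds
      have hev : ∀ᶠ u in 𝓝[<] T, ‖θ u - θ₀‖ ≤ Φ 0 := by
        filter_upwards [Ioo_mem_nhdsLT hTpos] with u hu
        exact hsmall u ⟨hu.1.le, hu.2⟩
      have := le_of_tendsto h1 hev
      linarith
    intro t ht
    have hball : ∀ u ∈ Set.Icc 0 t, θ u ∈ Metric.closedBall θ₀ R := by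
      intro u hu
      have hnotmem : u ∉ Set.Ici 0 ∩ (fun s => ‖θ s - θ₀‖) ⁻¹' Set.Ici R := by
        rw [hBempty]; exact Set.notMem_empty u
      rw [Metric.mem_closedBall, dist_eq_norm]
      by_contra hcon
      push_neg at hcon
      exact hnotmem ⟨hu.1, le_of_lt hcon⟩
    have := hLE 0 t le_rfl ht hball
    rw [hθ0] at this
    linarith [hΦnn t]
  have hballR : ∀ t, 0 ≤ t → θ t ∈ Metric.closedBall θ₀ R := by
    intro t ht
    rw [Metric.mem_closedBall, dist_eq_norm]
    exact le_trans (hboot t ht) hΦ0R.le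
  -- the trajectory-wide length estimate
  have hLE' : ∀ a b : ℝ, 0 ≤ a → a ≤ b → ‖θ b - θ a‖ ≤ Φ a - Φ b := by
    intro a b ha hab
    exact hLE a b ha hab (fun s hs => hballR s (le_trans ha hs.1))
  -- part 1 : value bound
  have hXpos : ∀ t, 0 ≤ t → 0 < (1 - 2 * α) / (α ^ 2 * c ^ 2) * γ t :=
    fun t ht => mul_pos (div_pos h2α (by positivity)) (hγpos t ht)
  have hXeq : ∀ t, (1 - 2 * α) / (α ^ 2 * c ^ 2) * γ t
      = (1 - 2 * α) * M * t + h 0 ^ (2 * α - 1) := by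
    intro t
    have h0eq : h 0 ^ (2 * α - 1) = f (θ 0) ^ (2 * α - 1) := rfl
    rw [h0eq, hγ, hMdef]
    field_simp
    ring
  have hval : ∀ t, 0 ≤ t →
      h t ≤ ((1 - 2 * α) / (α ^ 2 * c ^ 2) * γ t) ^ (-(1 / (1 - 2 * α))) := by
    intro t ht
    rcases (hnn t).lt_or_eq with hpos | hzero
    · have hposall : ∀ s ∈ Set.Icc 0 t, 0 < h s := fun s hs =>
        lt_of_lt_of_le hpos (hanti (Set.mem_Ici.mpr hs.1) (Set.mem_Ici.mpr ht) hs.2)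
      have hmono : MonotoneOn (fun s => h s ^ (2 * α - 1) - (1 - 2 * α) * M * s)
          (Set.Icc 0 t) := by
        apply monotoneOn_of_deriv_nonneg (convex_Icc 0 t)
        · intro s hs
          have hc1 : ContinuousAt (fun s => h s ^ (2 * α - 1)) s :=
            (Real.continuousAt_rpow_const (h s) _ (Or.inl (ne_of_gt (hposall s hs)))).comp
              (hhcont s hs.1)
          exact (hc1.sub ((continuous_const.mul continuous_id).continuousAt)).continuousWithinAt
        · intro s hs
          rw [interior_Icc] at hs
          have hsI : s ∈ Set.Icc 0 t := ⟨hs.1.le, hs.2.le⟩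
          have hd : HasDerivAt (fun s => h s ^ (2 * α - 1) - (1 - 2 * α) * M * s)
              ((-‖gradient f (θ s)‖ ^ 2) * (2 * α - 1) * h s ^ (2 * α - 1 - 1)
                - (1 - 2 * α) * M) s := by
            have h1 := (hderiv s hs.1.le).rpow_const (p := 2 * α - 1) (Or.inl (ne_of_gt (hposall s hsI)))
            have h2 : HasDerivAt (fun s : ℝ => (1 - 2 * α) * M * s) ((1 - 2 * α) * M) s := by
              simpa using (hasDerivAt_id s).const_mul ((1 - 2 * α) * M)
            exact h1.sub h2
          exact hd.differentiableAt.differentiableWithinAt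
        · intro s hs
          rw [interior_Icc] at hs
          have hsI : s ∈ Set.Icc 0 t := ⟨hs.1.le, hs.2.le⟩
          have hd : HasDerivAt (fun s => h s ^ (2 * α - 1) - (1 - 2 * α) * M * s)
              ((-‖gradient f (θ s)‖ ^ 2) * (2 * α - 1) * h s ^ (2 * α - 1 - 1)
                - (1 - 2 * α) * M) s := by
            have h1 := (hderiv s hs.1.le).rpow_const (p := 2 * α - 1) (Or.inl (ne_of_gt (hposall s hsI)))
            have h2 : HasDerivAt (fun s : ℝ => (1 - 2 * α) * M * s) ((1 - 2 * α) * M) s := by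
              simpa using (hasDerivAt_id s).const_mul ((1 - 2 * α) * M)
            exact h1.sub h2
          rw [hd.deriv]
          have hII' := hII s hs.1.le (hballR s hs.1.le) (hposall s hsI)
          rw [show (2 : ℝ) * α - 1 - 1 = 2 * α - 2 by ring]
          nlinarith [hII', h2α]
      have hw := hmono (Set.left_mem_Icc.mpr ht) (Set.right_mem_Icc.mpr ht) ht
      simp only [mul_zero, sub_zero] at hw
      have hXle : (1 - 2 * α) / (α ^ 2 * c ^ 2) * γ t ≤ h t ^ (2 * α - 1) := by
        rw [hXeq t]
        have : h 0 ^ (2 * α - 1) = f (θ 0) ^ (2 * α - 1) := rfl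
        linarith [hw]
      have hinv : (h t ^ (2 * α - 1)) ^ (-(1 / (1 - 2 * α)))
          ≤ ((1 - 2 * α) / (α ^ 2 * c ^ 2) * γ t) ^ (-(1 / (1 - 2 * α))) :=
        Real.rpow_le_rpow_of_nonpos (hXpos t ht) hXle
          (neg_nonpos.mpr (by positivity))
      have hht : (h t ^ (2 * α - 1)) ^ (-(1 / (1 - 2 * α))) = h t := by
        rw [← Real.rpow_mul (hnn t)]
        rw [show (2 * α - 1) * (-(1 / (1 - 2 * α))) = 1 from by
          field_simp; ring]
        exact Real.rpow_one _
      rw [← hht]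
      exact hinv
    · rw [← hzero]
      exact (Real.rpow_pos_of_pos (hXpos t ht) _).le
  -- limits at infinity
  have hXtop : Tendsto (fun t => (1 - 2 * α) / (α ^ 2 * c ^ 2) * γ t) atTop atTop := by
    apply Tendsto.const_mul_atTop (div_pos h2α (by positivity))
    have hγfun : γ = fun t => σF ^ 2 * σ₀ ^ 2 / 4 * t
        + c ^ 2 * α ^ 2 / (1 - 2 * α) * f (θ 0) ^ (2 * α - 1) := funext hγ
    rw [hγfun]
    exact tendsto_atTop_add_const_right _ _
      (Tendsto.const_mul_atTop (by positivity) tendsto_id)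
  have hbound0 : Tendsto (fun t => ((1 - 2 * α) / (α ^ 2 * c ^ 2) * γ t) ^ (-(1 / (1 - 2 * α))))
      atTop (𝓝 0) :=
    (tendsto_rpow_neg_atTop (by positivity : (0:ℝ) < 1 / (1 - 2 * α))).comp hXtop
  have hh0 : Tendsto h atTop (𝓝 0) := by
    apply tendsto_of_tendsto_of_tendsto_of_le_of_le' tendsto_const_nhds hbound0
    · exact Filter.Eventually.of_forall hnn
    · filter_upwards [eventually_ge_atTop (0:ℝ)] with t ht
      exact hval t ht
  have hrpow0 : Tendsto (fun t => h t ^ α) atTop (𝓝 0) := by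
    have hcn : ContinuousAt (fun x : ℝ => x ^ α) 0 :=
      Real.continuousAt_rpow_const _ _ (Or.inr hα0.le)
    have := hcn.tendsto.comp hh0
    rwa [Real.zero_rpow (ne_of_gt hα0)] at this
  have hΦ0 : Tendsto Φ atTop (𝓝 0) := by
    have := hrpow0.const_mul K
    simpa using this
  -- Cauchy and limit
  have hdist : ∀ a b : ℝ, 0 ≤ a → a ≤ b → dist (θ b) (θ a) ≤ Φ a := by
    intro a b ha hab
    rw [dist_eq_norm]
    linarith [hLE' a b ha hab, hΦnn b]
  have hcauchy : CauchySeq (fun k : ℕ => θ k) := by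
    apply cauchySeq_of_le_tendsto_0 (fun N : ℕ => 2 * Φ N)
    · intro k l N hk hl
      have h1 : dist (θ k) (θ N) ≤ Φ N := hdist N k (Nat.cast_nonneg N) (Nat.cast_le.mpr hk)
      have h2 : dist (θ l) (θ N) ≤ Φ N := hdist N l (Nat.cast_nonneg N) (Nat.cast_le.mpr hl)
      calc dist (θ k) (θ l) ≤ dist (θ k) (θ N) + dist (θ N) (θ l) := dist_triangle _ _ _
      _ ≤ Φ N + Φ N := add_le_add h1 (by rw [dist_comm]; exact h2)
      _ = 2 * Φ N := by ring
    · have := (hΦ0.comp tendsto_natCast_atTop_atTop).const_mul (2:ℝ)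
      simpa using this
  obtain ⟨θlim, hθlim⟩ := cauchySeq_tendsto_of_complete hcauchy
  have hdistlim : ∀ t, 0 ≤ t → ‖θ t - θlim‖ ≤ Φ t := by
    intro t ht
    have hev : ∀ᶠ k : ℕ in atTop, ‖θ t - θ k‖ ≤ Φ t := by
      filter_upwards [eventually_ge_atTop (Nat.ceil t)] with k hk
      have htk : t ≤ (k:ℝ) := le_trans (Nat.le_ceil t) (Nat.cast_le.mpr hk)
      have := hLE' t k ht htk
      rw [norm_sub_rev]
      linarith [hΦnn (k:ℝ)]
    have hcv : Tendsto (fun k : ℕ => ‖θ t - θ k‖) atTop (𝓝 ‖θ t - θlim‖) :=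
      (tendsto_const_nhds.sub hθlim).norm
    exact le_of_tendsto hcv hev
  have htendsto : Tendsto θ atTop (𝓝 θlim) := by
    rw [tendsto_iff_dist_tendsto_zero]
    apply tendsto_of_tendsto_of_tendsto_of_le_of_le' tendsto_const_nhds hΦ0
    · exact Filter.Eventually.of_forall (fun t => dist_nonneg)
    · filter_upwards [eventually_ge_atTop (0:ℝ)] with t ht
      rw [dist_eq_norm]
      exact hdistlim t ht
  refine ⟨hγpos, θlim, htendsto, ?_⟩
  intro t ht
  refine ⟨hval t ht, ?_⟩
  have h1 : ‖θ t - θlim‖ ≤ Φ t := hdistlim t ht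
  have h2 : h t ^ α ≤ (((1 - 2 * α) / (α ^ 2 * c ^ 2) * γ t) ^ (-(1 / (1 - 2 * α)))) ^ α :=
    Real.rpow_le_rpow (hnn t) (hval t ht) hα0.le
  have h3 : (((1 - 2 * α) / (α ^ 2 * c ^ 2) * γ t) ^ (-(1 / (1 - 2 * α)))) ^ α
      = ((1 - 2 * α) / (α ^ 2 * c ^ 2) * γ t) ^ (-(α / (1 - 2 * α))) := by
    rw [← Real.rpow_mul (hXpos t ht).le]
    congr 1
    ring
  calc ‖θ t - θlim‖ ≤ Φ t := h1
  _ = K * h t ^ α := rfl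
  _ ≤ K * ((1 - 2 * α) / (α ^ 2 * c ^ 2) * γ t) ^ (-(α / (1 - 2 * α))) := by
      rw [← h3]
      exact mul_le_mul_of_nonneg_left h2 hKpos.le
end

section
/- Under the stated assumptions on L, F, g, the KL assumption, the restricted injectivity assumption on B̄(θ₀, R), and the initialization condition, the gradient flow has a unique strong global solution: there exists exactly one continuously differentiable function θ : [0,∞) → ℝ^p with θ(0) = θ₀ and θ'(t) = −∇f(θ(t)) for all t ≥ 0. -/
open Filter MeasureTheory ProbabilityTheory
open scoped Topology NNReal

open Metric Set
open scoped RealInnerProductSpace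

section Retract
variable {E : Type*} [NormedAddCommGroup E] [NormedSpace ℝ E]

lemma retract_aux0 {R : ℝ} (w : E) (hw : ‖w‖ ≤ R) : min 1 (R / ‖w‖) • w = w := by
  rcases eq_or_ne w 0 with rfl | h
  · simp
  · rw [min_eq_left ((one_le_div (norm_pos_iff.2 h)).2 hw), one_smul]

lemma retract_aux {R : ℝ} (hR : 0 ≤ R) {u v : E} (hle : ‖v‖ ≤ ‖u‖) :
    ‖min 1 (R / ‖u‖) • u - min 1 (R / ‖v‖) • v‖ ≤ 2 * ‖u - v‖ := by
  by_cases hu : ‖u‖ ≤ R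
  · rw [retract_aux0 u hu, retract_aux0 v (hle.trans hu)]
    linarith [norm_nonneg (u - v)]
  · push_neg at hu
    have hupos : 0 < ‖u‖ := hR.trans_lt hu
    have hmu : min 1 (R / ‖u‖) = R / ‖u‖ :=
      min_eq_right (by rw [div_le_one hupos]; exact hu.le)
    have hs0 : 0 ≤ R / ‖u‖ := by positivity
    have hs1 : R / ‖u‖ ≤ 1 := by rw [div_le_one hupos]; exact hu.le
    have h3 : ‖u‖ - ‖v‖ ≤ ‖u - v‖ := norm_sub_norm_le u v
    by_cases hv : ‖v‖ ≤ R
    · rw [retract_aux0 v hv, hmu]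
      have h1 : ‖(R / ‖u‖) • u - v‖ ≤ ‖(R / ‖u‖) • u - u‖ + ‖u - v‖ := by
        have := dist_triangle ((R / ‖u‖) • u) u v
        simpa [dist_eq_norm] using this
      have h2 : ‖(R / ‖u‖) • u - u‖ = ‖u‖ - R := by
        rw [show (R / ‖u‖) • u - u = (R / ‖u‖ - 1) • u by rw [sub_smul, one_smul],
          norm_smul, Real.norm_eq_abs, abs_of_nonpos (by linarith)]
        field_simp
        ring
      rw [h2] at h1
      linarith
    · push_neg at hv
      have hvpos : 0 < ‖v‖ := hR.trans_lt hv
      have hmv : min 1 (R / ‖v‖) = R / ‖v‖ :=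
        min_eq_right (by rw [div_le_one hvpos]; exact hv.le)
      rw [hmu, hmv]
      have key : (R / ‖u‖) • u - (R / ‖v‖) • v
          = (R / ‖u‖) • (u - v) + (R / ‖u‖ - R / ‖v‖) • v := by
        rw [smul_sub, sub_smul]; abel
      rw [key]
      have h1 : ‖(R / ‖u‖) • (u - v) + (R / ‖u‖ - R / ‖v‖) • v‖
          ≤ (R / ‖u‖) * ‖u - v‖ + |R / ‖u‖ - R / ‖v‖| * ‖v‖ := by
        refine (norm_add_le _ _).trans ?_
        rw [norm_smul, norm_smul, Real.norm_eq_abs, Real.norm_eq_abs, abs_of_nonneg hs0]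
      have hdiv : R / ‖u‖ ≤ R / ‖v‖ := div_le_div_of_nonneg_left hR hvpos hle
      have h2 : |R / ‖u‖ - R / ‖v‖| = R / ‖v‖ - R / ‖u‖ := by
        rw [abs_of_nonpos (by linarith)]; ring
      rw [h2] at h1
      have e1 : R / ‖v‖ * ‖v‖ = R := div_mul_cancel₀ _ hvpos.ne'
      have e2 : R / ‖u‖ * ‖u‖ = R := div_mul_cancel₀ _ hupos.ne'
      have h4 : R / ‖u‖ * (‖u‖ - ‖v‖) ≤ R / ‖u‖ * ‖u - v‖ :=
        mul_le_mul_of_nonneg_left h3 hs0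
      have h5 : R / ‖u‖ * ‖u - v‖ ≤ 1 * ‖u - v‖ :=
        mul_le_mul_of_nonneg_right hs1 (norm_nonneg _)
      nlinarith [norm_nonneg (u - v), mul_sub (R / ‖u‖) ‖u‖ ‖v‖, sub_mul (R / ‖v‖) (R / ‖u‖) ‖v‖]

/-- Radial retraction onto the closed ball. -/
noncomputable def ballRetract (c : E) (R : ℝ) (x : E) : E :=
  c + (min 1 (R / ‖x - c‖)) • (x - c)

lemma ballRetract_mem (c : E) {R : ℝ} (hR : 0 ≤ R) (x : E) :
    ballRetract c R x ∈ closedBall c R := by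
  rcases eq_or_ne x c with rfl | hx
  · simp [ballRetract, hR]
  · have h0 : (0:ℝ) < ‖x - c‖ := by
      rw [norm_pos_iff, sub_ne_zero]; exact hx
    have hmin : (0:ℝ) ≤ min 1 (R / ‖x - c‖) := le_min zero_le_one (by positivity)
    simp only [ballRetract, mem_closedBall, dist_eq_norm, add_sub_cancel_left]
    rw [norm_smul, Real.norm_eq_abs, abs_of_nonneg hmin]
    calc min 1 (R / ‖x - c‖) * ‖x - c‖ ≤ (R / ‖x - c‖) * ‖x - c‖ :=
          mul_le_mul_of_nonneg_right (min_le_right _ _) (norm_nonneg _)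
      _ = R := div_mul_cancel₀ _ h0.ne'

lemma ballRetract_eq_self (c : E) {R : ℝ} {x : E} (hx : x ∈ closedBall c R) :
    ballRetract c R x = x := by
  have : min 1 (R / ‖x - c‖) • (x - c) = x - c :=
    retract_aux0 _ (by simpa [dist_eq_norm] using hx)
  simp [ballRetract, this]

lemma ballRetract_lipschitz (c : E) {R : ℝ} (hR : 0 ≤ R) :
    LipschitzWith 2 (ballRetract c R) := by
  apply LipschitzWith.of_dist_le_mul
  intro x y
  have hdxy : dist (ballRetract c R x) (ballRetract c R y)
      = ‖min 1 (R / ‖x - c‖) • (x - c) - min 1 (R / ‖y - c‖) • (y - c)‖ := by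
    rw [dist_eq_norm]; congr 1; simp [ballRetract]
  have hdist : dist x y = ‖(x - c) - (y - c)‖ := by rw [dist_eq_norm]; congr 1; abel
  rw [hdxy, hdist]
  push_cast
  rcases le_total ‖y - c‖ ‖x - c‖ with hle | hle
  · exact retract_aux hR hle
  · rw [show min 1 (R / ‖x - c‖) • (x - c) - min 1 (R / ‖y - c‖) • (y - c)
        = -(min 1 (R / ‖y - c‖) • (y - c) - min 1 (R / ‖x - c‖) • (x - c)) by abel, norm_neg,
      ← norm_neg ((x - c) - (y - c)), show -((x - c) - (y - c)) = (y - c) - (x - c) by abel]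
    exact retract_aux hR hle

end Retract

section Global
variable {E : Type*} [NormedAddCommGroup E] [NormedSpace ℝ E] [CompleteSpace E]

lemma global_flow {W : E → E} {K : ℝ≥0} (hW : LipschitzWith K W) {M : ℝ}
    (hM : ∀ x, ‖W x‖ ≤ M) (x₀ : E) :
    ∃ α : ℝ → E, α 0 = x₀ ∧ ∀ t : ℝ, HasDerivAt α (W (α t)) t := by
  have hM0 : 0 ≤ M := (norm_nonneg _).trans (hM x₀)
  have sol : ∀ N : ℕ, ∃ f : ℝ → E, f 0 = x₀ ∧ ∀ t ∈ Icc (-(N + 1 : ℝ)) (N + 1),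
      HasDerivWithinAt f (W (f t)) (Icc (-(N + 1 : ℝ)) (N + 1)) t := by
    intro N
    have hN : (0:ℝ) ≤ N + 1 := by positivity
    have hpl : IsPicardLindelof (fun _ x => W x) (tmin := -(N + 1 : ℝ)) (tmax := N + 1)
        ⟨0, by constructor <;> linarith⟩ x₀ (M.toNNReal * ((N : ℝ≥0) + 1)) 0 M.toNNReal K :=
      IsPicardLindelof.of_time_independent (fun x _ => (hM x).trans (Real.le_coe_toNNReal M))
        hW.lipschitzOnWith (by simp [Real.coe_toNNReal _ hM0])
    exact hpl.exists_eq_forall_mem_Icc_hasDerivWithinAt₀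
  choose f hf0 hf using sol
  have hcont : ∀ N : ℕ, ContinuousOn (f N) (Icc (-(N + 1 : ℝ)) (N + 1)) :=
    fun N t ht => (hf N t ht).continuousWithinAt
  have hdiff : ∀ N : ℕ, ∀ t ∈ Ioo (-(N + 1 : ℝ)) (N + 1), HasDerivAt (f N) (W (f N t)) t :=
    fun N t ht => (hf N t (Ioo_subset_Icc_self ht)).hasDerivAt (Icc_mem_nhds ht.1 ht.2)
  have coh : ∀ N M' : ℕ, ∀ t : ℝ, |t| ≤ (N:ℝ) + 1 → |t| ≤ (M':ℝ) + 1 → f N t = f M' t := by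
    intro N M' t htN htM
    set c : ℝ := min ((N:ℝ) + 1) ((M':ℝ) + 1) with hc
    have hc0 : 0 < c := lt_min (by positivity) (by positivity)
    have hIooN : Ioo (-c) c ⊆ Ioo (-((N:ℝ) + 1)) ((N:ℝ) + 1) :=
      Ioo_subset_Ioo (neg_le_neg (min_le_left _ _)) (min_le_left _ _)
    have hIooM : Ioo (-c) c ⊆ Ioo (-((M':ℝ) + 1)) ((M':ℝ) + 1) :=
      Ioo_subset_Ioo (neg_le_neg (min_le_right _ _)) (min_le_right _ _)
    have hIccN : Icc (-c) c ⊆ Icc (-((N:ℝ) + 1)) ((N:ℝ) + 1) :=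
      Icc_subset_Icc (neg_le_neg (min_le_left _ _)) (min_le_left _ _)
    have hIccM : Icc (-c) c ⊆ Icc (-((M':ℝ) + 1)) ((M':ℝ) + 1) :=
      Icc_subset_Icc (neg_le_neg (min_le_right _ _)) (min_le_right _ _)
    have huniq := ODE_solution_unique_of_mem_Icc
      (v := fun _ x => W x) (s := fun _ => univ) (K := K)
      (fun _ _ => hW.lipschitzOnWith)
      (show (0:ℝ) ∈ Ioo (-c) c from ⟨by linarith, hc0⟩)
      ((hcont N).mono hIccN)
      (fun s hs => hdiff N s (hIooN hs))
      (fun _ _ => mem_univ _)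
      ((hcont M').mono hIccM)
      (fun s hs => hdiff M' s (hIooM hs))
      (fun _ _ => mem_univ _)
      ((hf0 N).trans (hf0 M').symm)
    exact huniq ⟨neg_le_of_abs_le (le_min htN htM), le_of_abs_le (le_min htN htM)⟩
  refine ⟨fun t => f ⌊|t|⌋₊ t, by simpa using hf0 0, fun t => ?_⟩
  set N := ⌊|t|⌋₊ with hN
  have htN : |t| < (N:ℝ) + 1 := Nat.lt_floor_add_one _
  have hd := hdiff N t ⟨neg_lt_of_abs_lt htN, lt_of_abs_lt htN⟩
  have hev : (fun s => f ⌊|s|⌋₊ s) =ᶠ[nhds t] f N := by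
    have hopen : IsOpen {s : ℝ | |s| < (N:ℝ) + 1} := isOpen_lt (continuous_abs) continuous_const
    filter_upwards [hopen.mem_nhds htN] with s hs
    exact coh ⌊|s|⌋₊ N s (Nat.lt_floor_add_one _).le (le_of_lt hs)
  have : HasDerivAt (fun s => f ⌊|s|⌋₊ s) (W (f N t)) t := hd.congr_of_eventuallyEq hev
  simpa [coh ⌊|t|⌋₊ N t htN.le htN.le] using this

end Global

section Helpers
variable {G E F' : Type*}
  [NormedAddCommGroup G] [InnerProductSpace ℝ G] [CompleteSpace G]
  [NormedAddCommGroup E] [InnerProductSpace ℝ E] [CompleteSpace E]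
  [NormedAddCommGroup F'] [InnerProductSpace ℝ F'] [CompleteSpace F']

lemma inner_gradient_eq (φ : F' → ℝ) (y : F') (w : F') :
    ⟪gradient φ y, w⟫ = fderiv ℝ φ y w := by
  rw [gradient, InnerProductSpace.toDual_symm_apply]

lemma gradient_chain (L : F' → ℝ) (Fm : E → F') (gm : G → E)
    (hL : ContDiff ℝ 1 L) (hF : ContDiff ℝ 1 Fm) (hg : ContDiff ℝ 1 gm) (q : G) :
    gradient (fun x => L (Fm (gm x))) q =
      ContinuousLinearMap.adjoint (fderiv ℝ gm q)
        (ContinuousLinearMap.adjoint (fderiv ℝ Fm (gm q)) (gradient L (Fm (gm q)))) := by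
  have hgd : HasFDerivAt gm (fderiv ℝ gm q) q :=
    ((hg.differentiable one_ne_zero) q).hasFDerivAt
  have hFd : HasFDerivAt Fm (fderiv ℝ Fm (gm q)) (gm q) :=
    ((hF.differentiable one_ne_zero) (gm q)).hasFDerivAt
  have hLd : HasFDerivAt L (fderiv ℝ L (Fm (gm q))) (Fm (gm q)) :=
    ((hL.differentiable one_ne_zero) (Fm (gm q))).hasFDerivAt
  have hcomp : HasFDerivAt (fun x => L (Fm (gm x)))
      ((fderiv ℝ L (Fm (gm q))).comp ((fderiv ℝ Fm (gm q)).comp (fderiv ℝ gm q))) q :=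
    (hLd.comp (gm q) hFd).comp q hgd
  apply ext_inner_right ℝ
  intro v
  rw [inner_gradient_eq, hcomp.fderiv]
  rw [ContinuousLinearMap.adjoint_inner_left, ContinuousLinearMap.adjoint_inner_left,
    inner_gradient_eq]
  rfl

omit [CompleteSpace E] [CompleteSpace F'] in
lemma apply_lip {α : Type*} [PseudoMetricSpace α]
    {B : α → E →L[ℝ] F'} {u : α → E} {s : Set α} {KB Ku CB Cu : ℝ}
    (hB : ∀ a ∈ s, ∀ b ∈ s, ‖B a - B b‖ ≤ KB * dist a b) (hBb : ∀ a ∈ s, ‖B a‖ ≤ CB)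
    (hu : ∀ a ∈ s, ∀ b ∈ s, ‖u a - u b‖ ≤ Ku * dist a b) (hub : ∀ a ∈ s, ‖u a‖ ≤ Cu)
    (hCu : 0 ≤ Cu) (hCB : 0 ≤ CB) :
    ∀ a ∈ s, ∀ b ∈ s, ‖B a (u a) - B b (u b)‖ ≤ (KB * Cu + CB * Ku) * dist a b := by
  intro a ha b hb
  have h1 : ‖B a (u a) - B b (u b)‖ ≤ ‖B a (u a) - B b (u a)‖ + ‖B b (u a) - B b (u b)‖ := by
    have := dist_triangle (B a (u a)) (B b (u a)) (B b (u b))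
    simpa [dist_eq_norm] using this
  have h2 : ‖B a (u a) - B b (u a)‖ ≤ (KB * dist a b) * Cu := by
    have e : B a (u a) - B b (u a) = (B a - B b) (u a) := by
      simp [ContinuousLinearMap.sub_apply]
    rw [e]
    calc ‖(B a - B b) (u a)‖ ≤ ‖B a - B b‖ * ‖u a‖ := (B a - B b).le_opNorm _
      _ ≤ (KB * dist a b) * Cu :=
        mul_le_mul (hB a ha b hb) (hub a ha) (norm_nonneg _)
          ((norm_nonneg _).trans (hB a ha b hb))
  have h3 : ‖B b (u a) - B b (u b)‖ ≤ CB * (Ku * dist a b) := by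
    have e : B b (u a) - B b (u b) = (B b) (u a - u b) := by simp
    rw [e]
    calc ‖(B b) (u a - u b)‖ ≤ ‖B b‖ * ‖u a - u b‖ := (B b).le_opNorm _
      _ ≤ CB * (Ku * dist a b) :=
        mul_le_mul (hBb b hb) (hu a ha b hb) (norm_nonneg _) hCB
  nlinarith [h1, h2, h3]

lemma adjoint_norm_eq (T : E →L[ℝ] F') :
    ‖ContinuousLinearMap.adjoint T‖ = ‖T‖ :=
  LinearIsometryEquiv.norm_map ContinuousLinearMap.adjoint T

end Helpers
set_option maxHeartbeats 2000000 in
theorem stmt11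
    {n m p : ℕ} (hn : 0 < n) (hm : 0 < m) (hp : 0 < p)
    (L : EuclideanSpace ℝ (Fin m) → ℝ)
    (F : EuclideanSpace ℝ (Fin n) → EuclideanSpace ℝ (Fin m))
    (g : EuclideanSpace ℝ (Fin p) → EuclideanSpace ℝ (Fin n))
    (hL : ContDiff ℝ 1 L)
    (hLnonneg : ∀ v, 0 ≤ L v) (hLmin : ∃ v, L v = 0)
    (hLgrad : ∀ s : Set (EuclideanSpace ℝ (Fin m)), Bornology.IsBounded s →
      ∃ K : ℝ≥0, LipschitzOnWith K (fun v => gradient L v) s)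
    (hF : ContDiff ℝ 1 F)
    (hJF : ∀ s : Set (EuclideanSpace ℝ (Fin n)), Bornology.IsBounded s →
      ∃ K : ℝ≥0, LipschitzOnWith K (fun x => fderiv ℝ F x) s)
    (hg : ContDiff ℝ 1 g)
    (hJg : ∀ s : Set (EuclideanSpace ℝ (Fin p)), Bornology.IsBounded s →
      ∃ K : ℝ≥0, LipschitzOnWith K (fun q => fderiv ℝ g q) s)
    (θ₀ : EuclideanSpace ℝ (Fin p))
    (r₀ : ℝ) (hr₀ : L (F (g θ₀)) < r₀)
    (ψ ψ' : ℝ → ℝ) (hψ0 : ψ 0 = 0)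
    (hψcont : ContinuousOn ψ (Set.Ico 0 r₀))
    (hψmono : StrictMonoOn ψ (Set.Ico 0 r₀))
    (hψd : ∀ s ∈ Set.Ioo (0:ℝ) r₀, HasDerivAt ψ (ψ' s) s)
    (hKL : ∀ v : EuclideanSpace ℝ (Fin m), 0 < L v → L v < r₀ →
      1 ≤ ψ' (L v) * ‖gradient L v‖)
    (σF : ℝ) (hσF : 0 < σF)
    (σ₀ : ℝ) (hσ₀ : σ₀ = sigmaMin (fderiv ℝ g θ₀)) (hσ₀pos : 0 < σ₀)
    (R : ℝ) (hRpos : 0 < R)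
    (hinj : ∀ q ∈ Metric.closedBall θ₀ R,
      gradient L (F (g q)) ∈ LinearMap.range (fderiv ℝ F (g q) : EuclideanSpace ℝ (Fin n) →ₗ[ℝ] EuclideanSpace ℝ (Fin m)) ∧
      ∀ z ∈ LinearMap.range (fderiv ℝ F (g q) : EuclideanSpace ℝ (Fin n) →ₗ[ℝ] EuclideanSpace ℝ (Fin m)),
        σF * ‖z‖ ≤ ‖ContinuousLinearMap.adjoint (fderiv ℝ F (g q)) z‖)
    (hLip : ∀ a ∈ Metric.closedBall θ₀ R, ∀ b ∈ Metric.closedBall θ₀ R,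
      ‖fderiv ℝ g a - fderiv ℝ g b‖ ≤ σ₀ / (2 * R) * ‖a - b‖)
    (hRR : 2 / (σF * σ₀) * ψ (L (F (g θ₀))) < R) :
    (∃ θ : ℝ → EuclideanSpace ℝ (Fin p), θ 0 = θ₀ ∧
      (∀ t ≥ (0:ℝ), HasDerivAt θ (-gradient (fun q => L (F (g q))) (θ t)) t) ∧
      ContinuousOn (fun t => -gradient (fun q => L (F (g q))) (θ t)) (Set.Ici 0)) ∧
    ∀ θ₁ θ₂ : ℝ → EuclideanSpace ℝ (Fin p),
      (θ₁ 0 = θ₀ ∧ (∀ t ≥ (0:ℝ), HasDerivAt θ₁ (-gradient (fun q => L (F (g q))) (θ₁ t)) t) ∧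
        ContinuousOn (fun t => -gradient (fun q => L (F (g q))) (θ₁ t)) (Set.Ici 0)) →
      (θ₂ 0 = θ₀ ∧ (∀ t ≥ (0:ℝ), HasDerivAt θ₂ (-gradient (fun q => L (F (g q))) (θ₂ t)) t) ∧
        ContinuousOn (fun t => -gradient (fun q => L (F (g q))) (θ₂ t)) (Set.Ici 0)) →
      ∀ t ≥ (0:ℝ), θ₁ t = θ₂ t := by
  classical
  set f : EuclideanSpace ℝ (Fin p) → ℝ := fun q => L (F (g q)) with hfdef
  have hr₀pos : 0 < r₀ := lt_of_le_of_lt (hLnonneg _) hr₀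
  have hfC : ContDiff ℝ 1 f := hL.comp (hF.comp hg)
  have hfdiff : ∀ q, DifferentiableAt ℝ f q := fun q => (hfC.differentiable one_ne_zero) q
  have gradF : ∀ q, gradient f q = ContinuousLinearMap.adjoint (fderiv ℝ g q)
      (ContinuousLinearMap.adjoint (fderiv ℝ F (g q)) (gradient L (F (g q)))) :=
    fun q => gradient_chain L F g hL hF hg q
  have hgradf_cont : Continuous (fun q => gradient f q) := by
    have h1 : Continuous (fun q => fderiv ℝ f q) := hfC.continuous_fderiv one_ne_zero
    exact (InnerProductSpace.toDual ℝ _).symm.continuous.comp h1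
  have hgradL_cont : Continuous (fun v => gradient L v) := by
    have h1 : Continuous (fun v => fderiv ℝ L v) := hL.continuous_fderiv one_ne_zero
    exact (InnerProductSpace.toDual ℝ _).symm.continuous.comp h1
  -- Lipschitz bounds for the gradient field on balls
  have hVlip : ∀ ρ : ℝ, 0 < ρ → ∃ C : ℝ, 0 ≤ C ∧
      ∀ a ∈ Metric.closedBall θ₀ ρ, ∀ b ∈ Metric.closedBall θ₀ ρ,
        ‖gradient f a - gradient f b‖ ≤ C * dist a b := by
    intro ρ hρ
    have hsc : IsCompact (Metric.closedBall θ₀ ρ) := isCompact_closedBall _ _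
    have hθ₀s : θ₀ ∈ Metric.closedBall θ₀ ρ := Metric.mem_closedBall_self hρ.le
    obtain ⟨c1, hc1⟩ := hsc.exists_bound_of_continuousOn
      ((hg.continuous_fderiv one_ne_zero).continuousOn)
    have hc10 : 0 ≤ c1 := (norm_nonneg _).trans (hc1 θ₀ hθ₀s)
    have hglip : ∀ a ∈ Metric.closedBall θ₀ ρ, ∀ b ∈ Metric.closedBall θ₀ ρ,
        ‖g a - g b‖ ≤ c1 * dist a b := by
      intro a ha b hb
      have := Convex.norm_image_sub_le_of_norm_fderiv_le
        (fun x _ => (hg.differentiable one_ne_zero) x) hc1 (convex_closedBall _ _) hb ha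
      rwa [dist_eq_norm]
    have hgmem : ∀ a ∈ Metric.closedBall θ₀ ρ, g a ∈ Metric.closedBall (g θ₀) (c1 * ρ) := by
      intro a ha
      rw [Metric.mem_closedBall, dist_eq_norm]
      calc ‖g a - g θ₀‖ ≤ c1 * dist a θ₀ := hglip a ha θ₀ hθ₀s
        _ ≤ c1 * ρ := mul_le_mul_of_nonneg_left
            (by rwa [Metric.mem_closedBall] at ha) hc10
    have hgθ₀1 : g θ₀ ∈ Metric.closedBall (g θ₀) (c1 * ρ) :=
      Metric.mem_closedBall_self (by positivity)
    obtain ⟨c2, hc2⟩ := (isCompact_closedBall (g θ₀) (c1 * ρ)).exists_bound_of_continuousOn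
      ((hF.continuous_fderiv one_ne_zero).continuousOn)
    have hc20 : 0 ≤ c2 := (norm_nonneg _).trans (hc2 _ hgθ₀1)
    have hFlip : ∀ x ∈ Metric.closedBall (g θ₀) (c1 * ρ), ∀ y ∈ Metric.closedBall (g θ₀) (c1 * ρ),
        ‖F x - F y‖ ≤ c2 * dist x y := by
      intro x hx y hy
      have := Convex.norm_image_sub_le_of_norm_fderiv_le
        (fun z _ => (hF.differentiable one_ne_zero) z) hc2 (convex_closedBall _ _) hy hx
      rwa [dist_eq_norm]
    have hFmem : ∀ a ∈ Metric.closedBall θ₀ ρ,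
        F (g a) ∈ Metric.closedBall (F (g θ₀)) (c2 * (c1 * ρ)) := by
      intro a ha
      rw [Metric.mem_closedBall, dist_eq_norm]
      calc ‖F (g a) - F (g θ₀)‖ ≤ c2 * dist (g a) (g θ₀) := hFlip _ (hgmem a ha) _ hgθ₀1
        _ ≤ c2 * (c1 * ρ) := mul_le_mul_of_nonneg_left
            (by rw [← Metric.mem_closedBall]; exact hgmem a ha) hc20
    obtain ⟨c3, hc3⟩ := (isCompact_closedBall (F (g θ₀))
      (c2 * (c1 * ρ))).exists_bound_of_continuousOn hgradL_cont.continuousOn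
    have hc30 : 0 ≤ c3 := (norm_nonneg _).trans
      (hc3 _ (Metric.mem_closedBall_self (by positivity)))
    obtain ⟨KL2, hKL2⟩ := hLgrad (Metric.closedBall (F (g θ₀)) (c2 * (c1 * ρ)))
      Metric.isBounded_closedBall
    obtain ⟨KF, hKF⟩ := hJF (Metric.closedBall (g θ₀) (c1 * ρ)) Metric.isBounded_closedBall
    obtain ⟨Kg, hKg⟩ := hJg (Metric.closedBall θ₀ ρ) Metric.isBounded_closedBall
    have hB1 : ∀ a ∈ Metric.closedBall θ₀ ρ, ∀ b ∈ Metric.closedBall θ₀ ρ,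
        ‖ContinuousLinearMap.adjoint (fderiv ℝ F (g a))
          - ContinuousLinearMap.adjoint (fderiv ℝ F (g b))‖ ≤ ((KF : ℝ) * c1) * dist a b := by
      intro a ha b hb
      have e : ContinuousLinearMap.adjoint (fderiv ℝ F (g a))
          - ContinuousLinearMap.adjoint (fderiv ℝ F (g b))
          = ContinuousLinearMap.adjoint (fderiv ℝ F (g a) - fderiv ℝ F (g b)) :=
        (map_sub _ _ _).symm
      rw [e, adjoint_norm_eq]
      have h1 := hKF.dist_le_mul (g a) (hgmem a ha) (g b) (hgmem b hb)
      simp only [dist_eq_norm] at h1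
      calc ‖fderiv ℝ F (g a) - fderiv ℝ F (g b)‖ ≤ (KF : ℝ) * ‖g a - g b‖ := h1
        _ ≤ (KF : ℝ) * (c1 * dist a b) :=
            mul_le_mul_of_nonneg_left (hglip a ha b hb) KF.coe_nonneg
        _ = ((KF : ℝ) * c1) * dist a b := by ring
    have hB1b : ∀ a ∈ Metric.closedBall θ₀ ρ,
        ‖ContinuousLinearMap.adjoint (fderiv ℝ F (g a))‖ ≤ c2 := by
      intro a ha
      rw [adjoint_norm_eq]; exact hc2 _ (hgmem a ha)
    have hwlip : ∀ a ∈ Metric.closedBall θ₀ ρ, ∀ b ∈ Metric.closedBall θ₀ ρ,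
        ‖gradient L (F (g a)) - gradient L (F (g b))‖
          ≤ ((KL2 : ℝ) * (c2 * c1)) * dist a b := by
      intro a ha b hb
      have h1 := hKL2.dist_le_mul (F (g a)) (hFmem a ha) (F (g b)) (hFmem b hb)
      simp only [dist_eq_norm] at h1
      have h2 : ‖F (g a) - F (g b)‖ ≤ c2 * (c1 * dist a b) := by
        calc ‖F (g a) - F (g b)‖ ≤ c2 * dist (g a) (g b) := hFlip _ (hgmem a ha) _ (hgmem b hb)
          _ ≤ c2 * (c1 * dist a b) := by
              rw [dist_eq_norm]
              exact mul_le_mul_of_nonneg_left (hglip a ha b hb) hc20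
      calc ‖gradient L (F (g a)) - gradient L (F (g b))‖
          ≤ (KL2 : ℝ) * ‖F (g a) - F (g b)‖ := h1
        _ ≤ (KL2 : ℝ) * (c2 * (c1 * dist a b)) :=
            mul_le_mul_of_nonneg_left h2 KL2.coe_nonneg
        _ = ((KL2 : ℝ) * (c2 * c1)) * dist a b := by ring
    have hwb : ∀ a ∈ Metric.closedBall θ₀ ρ, ‖gradient L (F (g a))‖ ≤ c3 :=
      fun a ha => hc3 _ (hFmem a ha)
    have hu := apply_lip (B := fun q => ContinuousLinearMap.adjoint (fderiv ℝ F (g q)))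
      (u := fun q => gradient L (F (g q))) hB1 hB1b hwlip hwb hc30 hc20
    have hB2 : ∀ a ∈ Metric.closedBall θ₀ ρ, ∀ b ∈ Metric.closedBall θ₀ ρ,
        ‖ContinuousLinearMap.adjoint (fderiv ℝ g a)
          - ContinuousLinearMap.adjoint (fderiv ℝ g b)‖ ≤ (Kg : ℝ) * dist a b := by
      intro a ha b hb
      have e : ContinuousLinearMap.adjoint (fderiv ℝ g a)
          - ContinuousLinearMap.adjoint (fderiv ℝ g b)
          = ContinuousLinearMap.adjoint (fderiv ℝ g a - fderiv ℝ g b) :=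
        (map_sub _ _ _).symm
      rw [e, adjoint_norm_eq]
      have h1 := hKg.dist_le_mul a ha b hb
      simpa only [dist_eq_norm] using h1
    have hB2b : ∀ a ∈ Metric.closedBall θ₀ ρ,
        ‖ContinuousLinearMap.adjoint (fderiv ℝ g a)‖ ≤ c1 := by
      intro a ha
      rw [adjoint_norm_eq]; exact hc1 _ ha
    have hub : ∀ a ∈ Metric.closedBall θ₀ ρ,
        ‖ContinuousLinearMap.adjoint (fderiv ℝ F (g a)) (gradient L (F (g a)))‖ ≤ c2 * c3 := by
      intro a ha
      calc ‖ContinuousLinearMap.adjoint (fderiv ℝ F (g a)) (gradient L (F (g a)))‖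
          ≤ ‖ContinuousLinearMap.adjoint (fderiv ℝ F (g a))‖ * ‖gradient L (F (g a))‖ :=
            ContinuousLinearMap.le_opNorm _ _
        _ ≤ c2 * c3 := mul_le_mul (hB1b a ha) (hwb a ha) (norm_nonneg _) hc20
    have hfinal := apply_lip (B := fun q => ContinuousLinearMap.adjoint (fderiv ℝ g q))
      (u := fun q => ContinuousLinearMap.adjoint (fderiv ℝ F (g q)) (gradient L (F (g q))))
      hB2 hB2b hu hub (mul_nonneg hc20 hc30) hc10
    refine ⟨(Kg : ℝ) * (c2 * c3) + c1 * (((KF : ℝ) * c1) * c3 + c2 * ((KL2 : ℝ) * (c2 * c1))),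
      ?_, ?_⟩
    · have h1 : (0:ℝ) ≤ (Kg : ℝ) := Kg.coe_nonneg
      have h2 : (0:ℝ) ≤ (KF : ℝ) := KF.coe_nonneg
      have h3 : (0:ℝ) ≤ (KL2 : ℝ) := KL2.coe_nonneg
      nlinarith [mul_nonneg hc20 hc30, mul_nonneg (mul_nonneg h2 hc10) hc30,
        mul_nonneg hc20 (mul_nonneg h3 (mul_nonneg hc20 hc10))]
    · intro a ha b hb
      rw [gradF a, gradF b]
      exact hfinal a ha b hb
  -- the σ-lower bound
  have hadj0 : ∀ w : EuclideanSpace ℝ (Fin n),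
      σ₀ * ‖w‖ ≤ ‖ContinuousLinearMap.adjoint (fderiv ℝ g θ₀) w‖ := by
    intro w
    rcases eq_or_ne w 0 with rfl | hw
    · simp
    · have hw' : ‖w‖ ≠ 0 := norm_ne_zero_iff.2 hw
      have hunit : ‖(‖w‖⁻¹ • w : EuclideanSpace ℝ (Fin n))‖ = 1 := by
        rw [norm_smul, norm_inv, norm_norm, inv_mul_cancel₀ hw']
      have hb : BddBelow (Set.range fun w : {w : EuclideanSpace ℝ (Fin n) // ‖w‖ = 1} =>
          ‖ContinuousLinearMap.adjoint (fderiv ℝ g θ₀) w.1‖) := by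
        refine ⟨0, ?_⟩
        rintro x ⟨i, rfl⟩
        exact norm_nonneg _
      have h1 : σ₀ ≤ ‖ContinuousLinearMap.adjoint (fderiv ℝ g θ₀) (‖w‖⁻¹ • w)‖ := by
        rw [hσ₀, sigmaMin]
        exact ciInf_le hb ⟨_, hunit⟩
      have h2 : ‖ContinuousLinearMap.adjoint (fderiv ℝ g θ₀) (‖w‖⁻¹ • w)‖
          = ‖w‖⁻¹ * ‖ContinuousLinearMap.adjoint (fderiv ℝ g θ₀) w‖ := by
        rw [_root_.map_smul, norm_smul, norm_inv, norm_norm]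
      rw [h2] at h1
      have h3 := mul_le_mul_of_nonneg_right h1 (norm_nonneg w)
      calc σ₀ * ‖w‖ ≤ ‖w‖⁻¹ * ‖ContinuousLinearMap.adjoint (fderiv ℝ g θ₀) w‖ * ‖w‖ := h3
        _ = ‖ContinuousLinearMap.adjoint (fderiv ℝ g θ₀) w‖ := by
            field_simp
  have hadj : ∀ q ∈ Metric.closedBall θ₀ R, ∀ w : EuclideanSpace ℝ (Fin n),
      σ₀ / 2 * ‖w‖ ≤ ‖ContinuousLinearMap.adjoint (fderiv ℝ g q) w‖ := by
    intro q hq w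
    have hqR : ‖q - θ₀‖ ≤ R := by rwa [Metric.mem_closedBall, dist_eq_norm] at hq
    have hd := hLip q hq θ₀ (Metric.mem_closedBall_self hRpos.le)
    have hd2 : ‖fderiv ℝ g q - fderiv ℝ g θ₀‖ ≤ σ₀ / 2 := by
      have h5 : σ₀ / (2 * R) * ‖q - θ₀‖ ≤ σ₀ / (2 * R) * R :=
        mul_le_mul_of_nonneg_left hqR (by positivity)
      have h6 : σ₀ / (2 * R) * R = σ₀ / 2 := by field_simp
      linarith
    have h7 : ‖ContinuousLinearMap.adjoint (fderiv ℝ g θ₀) w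
        - ContinuousLinearMap.adjoint (fderiv ℝ g q) w‖ ≤ σ₀ / 2 * ‖w‖ := by
      have e : ContinuousLinearMap.adjoint (fderiv ℝ g θ₀) w
          - ContinuousLinearMap.adjoint (fderiv ℝ g q) w
          = (ContinuousLinearMap.adjoint (fderiv ℝ g θ₀ - fderiv ℝ g q)) w := by
        rw [map_sub]; rfl
      rw [e]
      calc ‖(ContinuousLinearMap.adjoint (fderiv ℝ g θ₀ - fderiv ℝ g q)) w‖
          ≤ ‖ContinuousLinearMap.adjoint (fderiv ℝ g θ₀ - fderiv ℝ g q)‖ * ‖w‖ :=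
            ContinuousLinearMap.le_opNorm _ _
        _ = ‖fderiv ℝ g θ₀ - fderiv ℝ g q‖ * ‖w‖ := by rw [adjoint_norm_eq]
        _ ≤ σ₀ / 2 * ‖w‖ :=
            mul_le_mul_of_nonneg_right (by rw [norm_sub_rev]; exact hd2) (norm_nonneg _)
    have h8 := norm_sub_norm_le (ContinuousLinearMap.adjoint (fderiv ℝ g θ₀) w)
      (ContinuousLinearMap.adjoint (fderiv ℝ g q) w)
    have h9 := hadj0 w
    linarith
  have hlow : ∀ q ∈ Metric.closedBall θ₀ R,
      σ₀ / 2 * (σF * ‖gradient L (F (g q))‖) ≤ ‖gradient f q‖ := by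
    intro q hq
    rw [gradF q]
    have h1 := (hinj q hq).2 _ (hinj q hq).1
    calc σ₀ / 2 * (σF * ‖gradient L (F (g q))‖)
        ≤ σ₀ / 2 * ‖ContinuousLinearMap.adjoint (fderiv ℝ F (g q)) (gradient L (F (g q)))‖ :=
          mul_le_mul_of_nonneg_left h1 (by positivity)
      _ ≤ _ := hadj q hq _
  -- gradient vanishes at global minima
  have hgradf0 : ∀ q, L (F (g q)) = 0 → gradient f q = 0 := by
    intro q hq
    have hlm : IsLocalMin L (F (g q)) := Filter.Eventually.of_forall fun w => by
      rw [hq]; exact hLnonneg w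
    have h0 : gradient L (F (g q)) = 0 := by
      rw [gradient, hlm.fderiv_eq_zero, map_zero]
    rw [gradF q, h0, map_zero, map_zero]
  -- construct the modified global flow
  obtain ⟨CR, hCR0, hCR⟩ := hVlip R hRpos
  obtain ⟨M, hM⟩ := (isCompact_closedBall θ₀ R).exists_bound_of_continuousOn
    hgradf_cont.continuousOn
  set W : EuclideanSpace ℝ (Fin p) → EuclideanSpace ℝ (Fin p) :=
    fun x => -(gradient f (ballRetract θ₀ R x)) with hWdef
  have hWeq : ∀ x ∈ Metric.closedBall θ₀ R, W x = -(gradient f x) := by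
    intro x hx; rw [hWdef]; simp only; rw [ballRetract_eq_self θ₀ hx]
  have hWlip : LipschitzWith (Real.toNNReal (CR * 2)) W := by
    apply LipschitzWith.of_dist_le_mul
    intro x y
    have h1 : dist (W x) (W y)
        = ‖gradient f (ballRetract θ₀ R x) - gradient f (ballRetract θ₀ R y)‖ := by
      rw [hWdef]; simp only [dist_eq_norm]
      rw [show -(gradient f (ballRetract θ₀ R x)) - -(gradient f (ballRetract θ₀ R y))
        = -(gradient f (ballRetract θ₀ R x) - gradient f (ballRetract θ₀ R y)) by abel, norm_neg]
    have h2 := hCR _ (ballRetract_mem θ₀ hRpos.le x) _ (ballRetract_mem θ₀ hRpos.le y)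
    have h3 := (ballRetract_lipschitz θ₀ hRpos.le).dist_le_mul x y
    have h4 : (CR * 2 : ℝ) ≤ (Real.toNNReal (CR * 2) : ℝ) := by
      rw [Real.coe_toNNReal']; exact le_max_left _ _
    rw [h1]
    calc ‖gradient f (ballRetract θ₀ R x) - gradient f (ballRetract θ₀ R y)‖
        ≤ CR * dist (ballRetract θ₀ R x) (ballRetract θ₀ R y) := h2
      _ ≤ CR * (2 * dist x y) := by
          apply mul_le_mul_of_nonneg_left _ hCR0
          simpa using h3
      _ = CR * 2 * dist x y := by ring
      _ ≤ (Real.toNNReal (CR * 2) : ℝ) * dist x y :=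
          mul_le_mul_of_nonneg_right h4 dist_nonneg
  have hWbdd : ∀ x, ‖W x‖ ≤ M := by
    intro x; rw [hWdef]; simp only [norm_neg]
    exact hM _ (ballRetract_mem θ₀ hRpos.le x)
  obtain ⟨α, hα0, hα⟩ := global_flow hWlip hWbdd θ₀
  have hαcont : Continuous α := continuous_iff_continuousAt.2 fun t => (hα t).continuousAt
  set c : ℝ := 2 / (σF * σ₀) with hcdef
  have hcpos : 0 < c := by positivity
  set R' : ℝ := c * ψ (L (F (g θ₀))) with hR'def
  have hψL₀ : 0 ≤ ψ (L (F (g θ₀))) := by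
    rcases eq_or_lt_of_le (hLnonneg (F (g θ₀))) with h0 | h0
    · rw [← h0, hψ0]
    · rw [← hψ0]
      exact (hψmono ⟨le_rfl, hr₀pos⟩ ⟨hLnonneg _, hr₀⟩ h0).le
  have hR'0 : 0 ≤ R' := mul_nonneg hcpos.le hψL₀
  have hR'R : R' < R := hRR
  -- the key descent estimate
  have key : ∀ T : ℝ, 0 ≤ T → (∀ s ∈ Set.Icc 0 T, α s ∈ Metric.closedBall θ₀ R) →
      ‖α T - θ₀‖ ≤ R' := by
    intro T hT hball
    have hderivα : ∀ s ∈ Set.Icc (0:ℝ) T, HasDerivAt α (-(gradient f (α s))) s := by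
      intro s hs
      have := hα s
      rwa [hWeq _ (hball s hs)] at this
    set h : ℝ → ℝ := fun s => f (α s) with hhdef
    have hhcont : Continuous h := hfC.continuous.comp hαcont
    have hd : ∀ s ∈ Set.Icc (0:ℝ) T, HasDerivAt h (-(‖gradient f (α s)‖ ^ 2)) s := by
      intro s hs
      have h1 := (hfdiff (α s)).hasFDerivAt.comp_hasDerivAt s (hderivα s hs)
      have h2 : fderiv ℝ f (α s) (-(gradient f (α s))) = -(‖gradient f (α s)‖ ^ 2) := by
        rw [← inner_gradient_eq, inner_neg_right, real_inner_self_eq_norm_sq]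
      rwa [h2] at h1
    have hanti : AntitoneOn h (Set.Icc 0 T) := by
      apply antitoneOn_of_deriv_nonpos (convex_Icc 0 T) hhcont.continuousOn
      · intro x hx
        rw [interior_Icc] at hx
        exact ((hd x (Set.Ioo_subset_Icc_self hx)).differentiableAt).differentiableWithinAt
      · intro x hx
        rw [interior_Icc] at hx
        rw [(hd x (Set.Ioo_subset_Icc_self hx)).deriv]
        simp [sq_nonneg]
    have hh0 : h 0 = L (F (g θ₀)) := by rw [hhdef]; simp only [hα0]; rfl
    have hhle : ∀ s ∈ Set.Icc (0:ℝ) T, h s < r₀ := by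
      intro s hs
      have := hanti (Set.left_mem_Icc.2 hT) hs hs.1
      rw [hh0] at this
      linarith
    have hhnn : ∀ s, 0 ≤ h s := fun s => hLnonneg _
    have lemA : ∀ t₂ ∈ Set.Icc (0:ℝ) T, (∀ s ∈ Set.Ico (0:ℝ) t₂, 0 < h s) →
        ‖α t₂ - α 0‖ ≤ c * (ψ (h 0) - ψ (h t₂)) := by
      intro t₂ ht₂ hpos
      have hsub : Set.Icc (0:ℝ) t₂ ⊆ Set.Icc (0:ℝ) T := Set.Icc_subset_Icc le_rfl ht₂.2
      have hmain := image_norm_le_of_norm_deriv_right_le_deriv_boundary'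
        (f := fun s => α s - α 0) (f' := fun s => -(gradient f (α s)))
        (a := 0) (b := t₂)
        (B := fun s => c * (ψ (h 0) - ψ (h s)))
        (B' := fun s => c * (ψ' (h s) * ‖gradient f (α s)‖ ^ 2))
        ((hαcont.sub continuous_const).continuousOn)
        (fun x hx => ((hderivα x (hsub (Set.Ico_subset_Icc_self hx))).sub_const
          (α 0)).hasDerivWithinAt)
        (by simp)
        ?_ ?_ ?_
      · exact hmain ⟨ht₂.1, le_rfl⟩
      · -- continuity of B
        have hmaps : Set.MapsTo h (Set.Icc 0 t₂) (Set.Ico 0 r₀) :=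
          fun x hx => ⟨hhnn x, hhle x (hsub hx)⟩
        exact continuousOn_const.mul
          (continuousOn_const.sub (hψcont.comp hhcont.continuousOn hmaps))
      · -- derivative of B
        intro x hx
        have hx' : x ∈ Set.Icc (0:ℝ) T := hsub (Set.Ico_subset_Icc_self hx)
        have hpsi := hψd (h x) ⟨hpos x hx, hhle x hx'⟩
        have hcomp : HasDerivAt (fun s => ψ (h s))
            (ψ' (h x) * -(‖gradient f (α x)‖ ^ 2)) x := hpsi.comp x (hd x hx')
        have hBd : HasDerivAt (fun s => c * (ψ (h 0) - ψ (h s)))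
            (c * (0 - ψ' (h x) * -(‖gradient f (α x)‖ ^ 2))) x :=
          ((hasDerivAt_const x (ψ (h 0))).sub hcomp).const_mul c
        have : HasDerivAt (fun s => c * (ψ (h 0) - ψ (h s)))
            (c * (ψ' (h x) * ‖gradient f (α x)‖ ^ 2)) x := by
          convert hBd using 1; ring
        exact this.hasDerivWithinAt
      · -- the bound
        intro x hx
        have hx' : x ∈ Set.Icc (0:ℝ) T := hsub (Set.Ico_subset_Icc_self hx)
        have hhx : h x = L (F (g (α x))) := rfl
        rw [norm_neg]
        show ‖gradient f (α x)‖ ≤ c * (ψ' (h x) * ‖gradient f (α x)‖ ^ 2)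
        rw [hhx]
        have hKLx : 1 ≤ ψ' (L (F (g (α x)))) * ‖gradient L (F (g (α x)))‖ :=
          hKL (F (g (α x))) (hhx ▸ hpos x hx) (hhx ▸ hhle x hx')
        have hlowx := hlow (α x) (hball x hx')
        have hψpos : 0 < ψ' (L (F (g (α x)))) := by
          nlinarith [norm_nonneg (gradient L (F (g (α x))))]
        have hcG : ‖gradient L (F (g (α x)))‖ ≤ c * ‖gradient f (α x)‖ := by
          have e : ‖gradient L (F (g (α x)))‖
              = c * (σ₀ / 2 * (σF * ‖gradient L (F (g (α x)))‖)) := by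
            rw [hcdef]; field_simp
          rw [e]
          exact mul_le_mul_of_nonneg_left hlowx hcpos.le
        nlinarith [mul_le_mul_of_nonneg_right
            (mul_le_mul_of_nonneg_left hcG hψpos.le) (norm_nonneg (gradient f (α x))),
          mul_le_mul_of_nonneg_right hKLx (norm_nonneg (gradient f (α x))),
          norm_nonneg (gradient f (α x))]
    rcases lt_or_eq_of_le (hhnn T) with hTpos | hTzero
    · have h1 := lemA T ⟨hT, le_rfl⟩
        (fun s hs => lt_of_lt_of_le hTpos
          (hanti ⟨hs.1, hs.2.le⟩ ⟨hT, le_rfl⟩ hs.2.le))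
      rw [hα0] at h1
      have hψT : 0 ≤ ψ (h T) := by
        rw [← hψ0]
        exact (hψmono ⟨le_rfl, hr₀pos⟩ ⟨hhnn T, hhle T ⟨hT, le_rfl⟩⟩ hTpos).le
      rw [hR'def, ← hh0]
      calc ‖α T - θ₀‖ ≤ c * (ψ (h 0) - ψ (h T)) := h1
        _ ≤ c * ψ (h 0) := by nlinarith
    · set S : Set ℝ := {s | s ∈ Set.Icc (0:ℝ) T ∧ h s = 0} with hSdef
      have hSne : S.Nonempty := ⟨T, ⟨hT, le_rfl⟩, hTzero.symm⟩
      have hSbd : BddBelow S := ⟨0, fun x hx => hx.1.1⟩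
      have hSclosed : IsClosed S := by
        have : S = Set.Icc (0:ℝ) T ∩ h ⁻¹' {0} := by
          ext x; simp [hSdef, Set.mem_preimage]
        rw [this]
        exact isClosed_Icc.inter (isClosed_singleton.preimage hhcont)
      set t₀ := sInf S with ht₀def
      have ht₀S : t₀ ∈ S := hSclosed.csInf_mem hSne hSbd
      have hposIco : ∀ s ∈ Set.Ico (0:ℝ) t₀, 0 < h s := by
        intro s hs
        rcases (hhnn s).lt_or_eq with h' | h'
        · exact h'
        · exfalso
          have hsS : s ∈ S := ⟨⟨hs.1, hs.2.le.trans ht₀S.1.2⟩, h'.symm⟩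
          exact absurd (csInf_le hSbd hsS) (not_le.2 hs.2)
      have h1 := lemA t₀ ht₀S.1 hposIco
      rw [hα0] at h1
      have hzero : ∀ s ∈ Set.Icc t₀ T, HasDerivWithinAt α 0 (Set.Icc t₀ T) s := by
        intro s hs
        have hsT : s ∈ Set.Icc (0:ℝ) T := ⟨ht₀S.1.1.trans hs.1, hs.2⟩
        have hhs : h s = 0 := le_antisymm (by
          have := hanti ht₀S.1 hsT hs.1
          rw [ht₀S.2] at this
          exact this) (hhnn s)
        have hda := hderivα s hsT
        rw [hgradf0 (α s) hhs, neg_zero] at hda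
        exact hda.hasDerivWithinAt
      have hconst := Convex.norm_image_sub_le_of_norm_hasDerivWithin_le
        (f' := fun _ => (0 : EuclideanSpace ℝ (Fin p))) (C := 0) hzero
        (fun x _ => by simp) (convex_Icc _ _)
        (Set.left_mem_Icc.2 ht₀S.1.2) (Set.right_mem_Icc.2 ht₀S.1.2)
      have hTt₀ : α T = α t₀ := by
        have h2 : ‖α T - α t₀‖ ≤ 0 := by simpa using hconst
        have h3 : α T - α t₀ = 0 := norm_le_zero_iff.1 h2
        rwa [sub_eq_zero] at h3
      rw [hTt₀, hR'def, ← hh0]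
      have hψt₀ : ψ (h t₀) = 0 := by rw [ht₀S.2, hψ0]
      calc ‖α t₀ - θ₀‖ ≤ c * (ψ (h 0) - ψ (h t₀)) := h1
        _ = c * ψ (h 0) := by rw [hψt₀]; ring
  -- the flow stays in the small ball
  have stays : ∀ t : ℝ, 0 ≤ t → ‖α t - θ₀‖ ≤ R' := by
    by_contra hcon
    push_neg at hcon
    obtain ⟨t1, ht1, hgt⟩ := hcon
    set B : Set ℝ := {t : ℝ | 0 ≤ t ∧ R' < ‖α t - θ₀‖} with hBdef
    have hBne : B.Nonempty := ⟨t1, ht1, hgt⟩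
    have hBbd : BddBelow B := ⟨0, fun x hx => hx.1⟩
    set τ := sInf B with hτdef
    have hτ0 : 0 ≤ τ := le_csInf hBne fun x hx => hx.1
    have hIco : ∀ s ∈ Set.Ico (0:ℝ) τ, ‖α s - θ₀‖ ≤ R' := by
      intro s hs
      by_contra hno
      push_neg at hno
      exact absurd (csInf_le hBbd ⟨hs.1, hno⟩) (not_le.2 hs.2)
    have hτle : ‖α τ - θ₀‖ ≤ R' := by
      rcases eq_or_lt_of_le hτ0 with h0 | h0
      · rw [← h0, hα0]; simpa using hR'0
      · have hclosed : IsClosed {x : ℝ | ‖α x - θ₀‖ ≤ R'} :=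
          isClosed_le (by fun_prop) continuous_const
        have hτcl : τ ∈ closure (Set.Ico (0:ℝ) τ) := by
          rw [closure_Ico h0.ne]; exact ⟨hτ0, le_rfl⟩
        exact hclosed.closure_subset_iff.2 hIco hτcl
    obtain ⟨δ, hδpos, hδ⟩ := Metric.continuousAt_iff.1 hαcont.continuousAt
      ((R - R') / 2) (by linarith)
    have hball2 : ∀ s ∈ Set.Icc (0:ℝ) (τ + δ / 2), α s ∈ Metric.closedBall θ₀ R := by
      intro s hs
      rcases le_or_gt s τ with h | h
      · have h1 : ‖α s - θ₀‖ ≤ R' := by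
          rcases eq_or_lt_of_le h with he | hl
          · rw [he]; exact hτle
          · exact hIco s ⟨hs.1, hl⟩
        rw [Metric.mem_closedBall, dist_eq_norm]
        linarith
      · have hds : dist s τ < δ := by
          rw [Real.dist_eq, abs_of_pos (by linarith)]
          linarith [hs.2]
        have h2 := hδ hds
        rw [Metric.mem_closedBall]
        have h3 : dist (α s) θ₀ ≤ dist (α s) (α τ) + dist (α τ) θ₀ := dist_triangle _ _ _
        simp only [dist_eq_norm] at h2 h3 ⊢
        linarith [hτle]
    have hle2 : ∀ s ∈ Set.Icc (0:ℝ) (τ + δ / 2), ‖α s - θ₀‖ ≤ R' := fun s hs =>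
      key s hs.1 fun u hu => hball2 u ⟨hu.1, hu.2.trans hs.2⟩
    obtain ⟨b, hbB, hblt⟩ := (csInf_lt_iff hBbd hBne).1 (show τ < τ + δ / 2 by linarith)
    exact absurd (hle2 b ⟨hbB.1, hblt.le⟩) (not_le.2 hbB.2)
  have hαball : ∀ t : ℝ, 0 ≤ t → α t ∈ Metric.closedBall θ₀ R := fun t ht => by
    rw [Metric.mem_closedBall, dist_eq_norm]
    exact (stays t ht).trans hR'R.le
  constructor
  · refine ⟨α, hα0, fun t ht => ?_, ?_⟩
    · have := hα t
      rwa [hWeq _ (hαball t ht)] at this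
    · exact ((hgradf_cont.comp hαcont).neg).continuousOn
  · rintro θ₁ θ₂ ⟨h10, h1d, -⟩ ⟨h20, h2d, -⟩
    by_contra hcon
    push_neg at hcon
    obtain ⟨t1, ht1, hne⟩ := hcon
    set D : Set ℝ := {t : ℝ | 0 ≤ t ∧ θ₁ t ≠ θ₂ t} with hDdef
    have hDne : D.Nonempty := ⟨t1, ht1, hne⟩
    have hDbd : BddBelow D := ⟨0, fun x hx => hx.1⟩
    set τ := sInf D with hτdef
    have hτ0 : 0 ≤ τ := le_csInf hDne fun x hx => hx.1
    have hcont1 : ∀ s : ℝ, 0 ≤ s → ContinuousAt θ₁ s := fun s hs => (h1d s hs).continuousAt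
    have hcont2 : ∀ s : ℝ, 0 ≤ s → ContinuousAt θ₂ s := fun s hs => (h2d s hs).continuousAt
    have heqIco : ∀ s ∈ Set.Ico (0:ℝ) τ, θ₁ s = θ₂ s := by
      intro s hs
      by_contra hno
      exact absurd (csInf_le hDbd ⟨hs.1, hno⟩) (not_le.2 hs.2)
    have heqτ : θ₁ τ = θ₂ τ := by
      rcases eq_or_lt_of_le hτ0 with h0 | h0
      · rw [← h0, h10, h20]
      · have hnb : (nhdsWithin τ (Set.Ico 0 τ)).NeBot := by
          apply mem_closure_iff_nhdsWithin_neBot.1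
          rw [closure_Ico h0.ne]
          exact ⟨hτ0, le_rfl⟩
        have l1 : Filter.Tendsto θ₁ (nhdsWithin τ (Set.Ico 0 τ)) (nhds (θ₁ τ)) :=
          (hcont1 τ hτ0).continuousWithinAt
        have l2 : Filter.Tendsto θ₂ (nhdsWithin τ (Set.Ico 0 τ)) (nhds (θ₂ τ)) :=
          (hcont2 τ hτ0).continuousWithinAt
        have l3 : Filter.Tendsto θ₁ (nhdsWithin τ (Set.Ico 0 τ)) (nhds (θ₂ τ)) :=
          l2.congr' (eventually_mem_nhdsWithin.mono fun s hs => (heqIco s hs).symm)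
        exact tendsto_nhds_unique l1 l3
    set ρ : ℝ := ‖θ₁ τ - θ₀‖ + 1 with hρdef
    have hρpos : 0 < ρ := by positivity
    obtain ⟨Cρ, hCρ0, hCρ⟩ := hVlip ρ hρpos
    have hlipv : LipschitzOnWith (Real.toNNReal Cρ)
        (fun x : EuclideanSpace ℝ (Fin p) => -gradient f x) (Metric.closedBall θ₀ ρ) := by
      apply LipschitzOnWith.of_dist_le_mul
      intro x hx y hy
      have h1 : dist (-gradient f x) (-gradient f y) = ‖gradient f x - gradient f y‖ := by
        rw [dist_eq_norm]
        rw [show -gradient f x - -gradient f y = -(gradient f x - gradient f y) by abel,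
          norm_neg]
      rw [h1]
      calc ‖gradient f x - gradient f y‖ ≤ Cρ * dist x y := hCρ x hx y hy
        _ ≤ (Real.toNNReal Cρ : ℝ) * dist x y :=
            mul_le_mul_of_nonneg_right
              (by rw [Real.coe_toNNReal']; exact le_max_left _ _) dist_nonneg
    obtain ⟨δ1, hδ1, hd1⟩ := Metric.continuousAt_iff.1 (hcont1 τ hτ0) 1 one_pos
    obtain ⟨δ2, hδ2, hd2⟩ := Metric.continuousAt_iff.1 (hcont2 τ hτ0) 1 one_pos
    set δ : ℝ := min δ1 δ2 / 2 with hδdef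
    have hδpos : 0 < δ := by
      have := lt_min hδ1 hδ2
      positivity
    have hmem : ∀ s ∈ Set.Icc τ (τ + δ), θ₁ s ∈ Metric.closedBall θ₀ ρ
        ∧ θ₂ s ∈ Metric.closedBall θ₀ ρ := by
      intro s hs
      have hds1 : dist s τ < δ1 := by
        rw [Real.dist_eq, abs_of_nonneg (by linarith [hs.1])]
        have hmin : δ < min δ1 δ2 := by
          rw [hδdef]
          exact half_lt_self (lt_min hδ1 hδ2)
        have := hs.2
        calc s - τ ≤ δ := by linarith
          _ < min δ1 δ2 := hmin
          _ ≤ δ1 := min_le_left _ _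
      have hds2 : dist s τ < δ2 := by
        rw [Real.dist_eq, abs_of_nonneg (by linarith [hs.1])]
        have hmin : δ < min δ1 δ2 := by
          rw [hδdef]
          exact half_lt_self (lt_min hδ1 hδ2)
        have := hs.2
        calc s - τ ≤ δ := by linarith
          _ < min δ1 δ2 := hmin
          _ ≤ δ2 := min_le_right _ _
      constructor
      · rw [Metric.mem_closedBall]
        have := hd1 hds1
        calc dist (θ₁ s) θ₀ ≤ dist (θ₁ s) (θ₁ τ) + dist (θ₁ τ) θ₀ := dist_triangle _ _ _
          _ ≤ 1 + (‖θ₁ τ - θ₀‖ + 0) := by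
              rw [dist_eq_norm (θ₁ τ)]
              linarith [this]
          _ ≤ ρ := by rw [hρdef]; linarith
      · rw [Metric.mem_closedBall]
        have := hd2 hds2
        calc dist (θ₂ s) θ₀ ≤ dist (θ₂ s) (θ₂ τ) + dist (θ₂ τ) θ₀ := dist_triangle _ _ _
          _ ≤ 1 + (‖θ₁ τ - θ₀‖ + 0) := by
              have h9 : dist (θ₂ τ) θ₀ = ‖θ₁ τ - θ₀‖ := by rw [← heqτ, dist_eq_norm]
              rw [h9]
              linarith [this]
          _ ≤ ρ := by rw [hρdef]; linarith
    have huniq := ODE_solution_unique_of_mem_Icc_right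
      (v := fun _ x => -gradient f x) (s := fun _ => Metric.closedBall θ₀ ρ)
      (K := Real.toNNReal Cρ) (fun _ _ => hlipv)
      (f := θ₁) (g := θ₂) (a := τ) (b := τ + δ)
      (fun s hs => (hcont1 s (hτ0.trans hs.1)).continuousWithinAt)
      (fun s hs => (h1d s (hτ0.trans hs.1)).hasDerivWithinAt)
      (fun s hs => (hmem s (Set.Ico_subset_Icc_self hs)).1)
      (fun s hs => (hcont2 s (hτ0.trans hs.1)).continuousWithinAt)
      (fun s hs => (h2d s (hτ0.trans hs.1)).hasDerivWithinAt)
      (fun s hs => (hmem s (Set.Ico_subset_Icc_self hs)).2)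
      heqτ
    obtain ⟨b, hbD, hblt⟩ := (csInf_lt_iff hDbd hDne).1 (show τ < τ + δ by linarith)
    have hbτ : τ ≤ b := csInf_le hDbd hbD
    exact hbD.2 (huniq ⟨hbτ, hblt.le⟩)
end

section
/- (Local Lipschitz constant of the Jacobian, both layers trained.) Let D > 0 and let θ₀ = (V₀, W₀) be a parameter whose matrix V₀ has every column of Euclidean norm at most D·√n. If n ≥ 2, then for every ρ > 0 and all parameters θ, θ̃ in the closed ball of radius ρ around θ₀ (in the Frobenius norm on parameter space): ‖J_g(θ) − J_g(θ̃)‖ ≤ B·(1 + 2(D + ρ))·√(n/k)·‖θ − θ̃‖. -/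
open MeasureTheory ProbabilityTheory Filter
open scoped Topology NNReal

/-- The two-layer DIP network `g(V, W) = (1/√k) V φ(W u)`, with the parameters `(V, W)`
encoded as a single Euclidean (Frobenius) vector. -/
noncomputable def dipNet (n k d : ℕ) (φ : ℝ → ℝ) (u : EuclideanSpace ℝ (Fin d))
    (θ : EuclideanSpace ℝ ((Fin n × Fin k) ⊕ (Fin k × Fin d))) : EuclideanSpace ℝ (Fin n) :=
  WithLp.toLp 2 (fun i => (1 / Real.sqrt k) *
    ∑ j : Fin k, θ (Sum.inl (i, j)) * φ (∑ l : Fin d, θ (Sum.inr (j, l)) * u l))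

/-- The two-layer DIP network with the linear layer `V` fixed. -/
noncomputable def dipNetW (n k d : ℕ) (φ : ℝ → ℝ) (u : EuclideanSpace ℝ (Fin d))
    (V : Matrix (Fin n) (Fin k) ℝ) (W : EuclideanSpace ℝ (Fin k × Fin d)) :
    EuclideanSpace ℝ (Fin n) :=
  WithLp.toLp 2 (fun i => (1 / Real.sqrt k) *
    ∑ j : Fin k, V i j * φ (∑ l : Fin d, W (j, l) * u l))

/-- Supremum norm on a Euclidean space. -/
noncomputable def supNorm {m : ℕ} (v : EuclideanSpace ℝ (Fin m)) : ℝ := ⨆ i, |v i|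

/-! ### Auxiliary material for `stmt16` -/

/-- The linear functional `θ ↦ ∑ l, θ (inr (j, l)) * u l`. -/
noncomputable def sCLM (n k d : ℕ) (u : EuclideanSpace ℝ (Fin d)) (j : Fin k) :
    EuclideanSpace ℝ ((Fin n × Fin k) ⊕ (Fin k × Fin d)) →L[ℝ] ℝ :=
  ∑ l : Fin d, u l • EuclideanSpace.proj (Sum.inr (j, l))

lemma sCLM_apply {n k d : ℕ} (u : EuclideanSpace ℝ (Fin d)) (j : Fin k)
    (θ : EuclideanSpace ℝ ((Fin n × Fin k) ⊕ (Fin k × Fin d))) :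
    sCLM n k d u j θ = ∑ l : Fin d, θ (Sum.inr (j, l)) * u l := by
  simp [sCLM, mul_comm]

/-- The Jacobian of `dipNet` at `θ`. -/
noncomputable def dipJ (n k d : ℕ) (φ : ℝ → ℝ) (u : EuclideanSpace ℝ (Fin d))
    (θ : EuclideanSpace ℝ ((Fin n × Fin k) ⊕ (Fin k × Fin d))) :
    EuclideanSpace ℝ ((Fin n × Fin k) ⊕ (Fin k × Fin d)) →L[ℝ] EuclideanSpace ℝ (Fin n) :=
  ((PiLp.continuousLinearEquiv 2 ℝ (fun _ : Fin n => ℝ)).symm :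
      ((i : Fin n) → ℝ) →L[ℝ] EuclideanSpace ℝ (Fin n)).comp
    (ContinuousLinearMap.pi fun i =>
      (1 / Real.sqrt k) • ∑ j : Fin k,
        (θ (Sum.inl (i, j)) • (deriv φ (sCLM n k d u j θ) • sCLM n k d u j) +
          φ (sCLM n k d u j θ) • EuclideanSpace.proj (Sum.inl (i, j))))

lemma dipJ_apply {n k d : ℕ} (φ : ℝ → ℝ) (u : EuclideanSpace ℝ (Fin d))
    (θ h : EuclideanSpace ℝ ((Fin n × Fin k) ⊕ (Fin k × Fin d))) (i : Fin n) :
    dipJ n k d φ u θ h i = (1 / Real.sqrt k) *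
      ∑ j : Fin k, (θ (Sum.inl (i, j)) * (deriv φ (sCLM n k d u j θ) * sCLM n k d u j h) +
        φ (sCLM n k d u j θ) * h (Sum.inl (i, j))) := by
  simp [dipJ, ContinuousLinearMap.sum_apply, mul_comm]

lemma dipNet_hasFDerivAt {n k d : ℕ} (φ : ℝ → ℝ) (hφ : ContDiff ℝ 1 φ)
    (u : EuclideanSpace ℝ (Fin d))
    (θ : EuclideanSpace ℝ ((Fin n × Fin k) ⊕ (Fin k × Fin d))) :
    HasFDerivAt (dipNet n k d φ u) (dipJ n k d φ u θ) θ := by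
  have hmain : HasFDerivAt
      (fun (θ' : EuclideanSpace ℝ ((Fin n × Fin k) ⊕ (Fin k × Fin d))) (i : Fin n) =>
        (1 / Real.sqrt k) *
          ∑ j : Fin k, θ' (Sum.inl (i, j)) * φ (∑ l : Fin d, θ' (Sum.inr (j, l)) * u l))
      (ContinuousLinearMap.pi fun i =>
        (1 / Real.sqrt k) • ∑ j : Fin k,
          (θ (Sum.inl (i, j)) • (deriv φ (sCLM n k d u j θ) • sCLM n k d u j) +
            φ (sCLM n k d u j θ) • EuclideanSpace.proj (Sum.inl (i, j)))) θ := by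
    rw [hasFDerivAt_pi]
    intro i
    apply HasFDerivAt.const_mul
    apply HasFDerivAt.fun_sum
    intro j _
    have hs : HasFDerivAt (fun θ' : EuclideanSpace ℝ ((Fin n × Fin k) ⊕ (Fin k × Fin d)) =>
        ∑ l : Fin d, θ' (Sum.inr (j, l)) * u l) (sCLM n k d u j) θ := by
      have hfun : (fun θ' : EuclideanSpace ℝ ((Fin n × Fin k) ⊕ (Fin k × Fin d)) =>
          ∑ l : Fin d, θ' (Sum.inr (j, l)) * u l) = ⇑(sCLM n k d u j) := by
        funext θ'; rw [sCLM_apply]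
      rw [hfun]
      exact (sCLM n k d u j).hasFDerivAt
    have h1 : HasFDerivAt (fun θ' : EuclideanSpace ℝ ((Fin n × Fin k) ⊕ (Fin k × Fin d)) =>
        θ' (Sum.inl (i, j)))
        (EuclideanSpace.proj (Sum.inl (i, j)) :
          EuclideanSpace ℝ ((Fin n × Fin k) ⊕ (Fin k × Fin d)) →L[ℝ] ℝ) θ := by
      have hfun : (fun θ' : EuclideanSpace ℝ ((Fin n × Fin k) ⊕ (Fin k × Fin d)) =>
          θ' (Sum.inl (i, j))) = ⇑(EuclideanSpace.proj (Sum.inl (i, j)) :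
          EuclideanSpace ℝ ((Fin n × Fin k) ⊕ (Fin k × Fin d)) →L[ℝ] ℝ) := by
        funext θ'; rfl
      rw [hfun]
      exact (EuclideanSpace.proj (Sum.inl (i, j)) :
          EuclideanSpace ℝ ((Fin n × Fin k) ⊕ (Fin k × Fin d)) →L[ℝ] ℝ).hasFDerivAt
    have hd : HasDerivAt φ (deriv φ (∑ l : Fin d, θ (Sum.inr (j, l)) * u l))
        (∑ l : Fin d, θ (Sum.inr (j, l)) * u l) :=
      ((hφ.differentiable one_ne_zero) _).hasDerivAt
    have h2 := hd.comp_hasFDerivAt θ hs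
    rw [← sCLM_apply u j θ] at h2
    have h4 := h1.mul h2
    simp only [Function.comp_def] at h4
    rw [← sCLM_apply u j θ] at h4
    exact h4
  have h3 := ((PiLp.continuousLinearEquiv 2 ℝ (fun _ : Fin n => ℝ)).symm.comp_hasFDerivAt_iff
    (f := fun (θ' : EuclideanSpace ℝ ((Fin n × Fin k) ⊕ (Fin k × Fin d))) (i : Fin n) =>
        (1 / Real.sqrt k) *
          ∑ j : Fin k, θ' (Sum.inl (i, j)) * φ (∑ l : Fin d, θ' (Sum.inr (j, l)) * u l))
    (x := θ)).2 hmain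
  exact h3

/-- `ℓ²` bound for a "matrix-vector product". -/
lemma l2_matvec_bound {n k : ℕ} (x : Fin n → Fin k → ℝ) (y : Fin k → ℝ) (C c : ℝ)
    (hC : 0 ≤ C) (hc : 0 ≤ c)
    (hx : ∑ i, ∑ j, x i j ^ 2 ≤ C ^ 2) (hy : ∑ j, y j ^ 2 ≤ c ^ 2) :
    Real.sqrt (∑ i, (∑ j, x i j * y j) ^ 2) ≤ C * c := by
  have h1 : ∑ i, (∑ j, x i j * y j) ^ 2 ≤ (C * c) ^ 2 := by
    calc ∑ i, (∑ j, x i j * y j) ^ 2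
        ≤ ∑ i, (∑ j, x i j ^ 2) * (∑ j, y j ^ 2) :=
          Finset.sum_le_sum fun i _ => Finset.sum_mul_sq_le_sq_mul_sq Finset.univ (x i) y
      _ = (∑ i, ∑ j, x i j ^ 2) * (∑ j, y j ^ 2) := (Finset.sum_mul _ _ _).symm
      _ ≤ C ^ 2 * c ^ 2 := by
          apply mul_le_mul hx hy (Finset.sum_nonneg fun j _ => sq_nonneg _) (by positivity)
      _ = (C * c) ^ 2 := by ring
  calc Real.sqrt (∑ i, (∑ j, x i j * y j) ^ 2) ≤ Real.sqrt ((C * c) ^ 2) :=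
        Real.sqrt_le_sqrt h1
    _ = C * c := Real.sqrt_sq (by positivity)

lemma norm_sq_split {n k d : ℕ} (θ : EuclideanSpace ℝ ((Fin n × Fin k) ⊕ (Fin k × Fin d))) :
    ‖θ‖ ^ 2 = (∑ p : Fin n × Fin k, θ (Sum.inl p) ^ 2) +
      ∑ p : Fin k × Fin d, θ (Sum.inr p) ^ 2 := by
  rw [EuclideanSpace.norm_eq, Real.sq_sqrt (by positivity)]
  simp [Fintype.sum_sum_type, sq_abs]

lemma euclid_norm_le {m : ℕ} (T : EuclideanSpace ℝ (Fin m)) (K : ℝ) (hK : 0 ≤ K)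
    (f : Fin m → ℝ) (hT : ∀ i, T i = K * f i) (C : ℝ) (hC0 : 0 ≤ C)
    (hC : Real.sqrt (∑ i, f i ^ 2) ≤ C) : ‖T‖ ≤ K * C := by
  rw [EuclideanSpace.norm_eq]
  have h1 : (∑ i, ‖T i‖ ^ 2) = K ^ 2 * ∑ i, f i ^ 2 := by
    rw [Finset.mul_sum]
    refine Finset.sum_congr rfl fun i _ => ?_
    rw [hT i, Real.norm_eq_abs, sq_abs]; ring
  rw [h1, Real.sqrt_mul (sq_nonneg K), Real.sqrt_sq hK]
  exact mul_le_mul_of_nonneg_left hC hK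

set_option maxHeartbeats 1000000 in
theorem stmt16 (n k d : ℕ) (hn : 2 ≤ n) (hk : 0 < k)
    (B D : ℝ) (hB : 0 < B) (hD : 0 < D)
    (φ : ℝ → ℝ) (hφ : ContDiff ℝ 1 φ)
    (hφB : ∀ x, |deriv φ x| ≤ B)
    (hφlip : ∀ x y, |deriv φ x - deriv φ y| ≤ B * |x - y|)
    (u : EuclideanSpace ℝ (Fin d)) (hu : ‖u‖ = 1)
    (θ₀ : EuclideanSpace ℝ ((Fin n × Fin k) ⊕ (Fin k × Fin d)))
    (hV₀col : ∀ j : Fin k,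
      Real.sqrt (∑ i : Fin n, θ₀ (Sum.inl (i, j)) ^ 2) ≤ D * Real.sqrt n) :
    ∀ ρ : ℝ, 0 < ρ →
      ∀ a ∈ Metric.closedBall θ₀ ρ, ∀ b ∈ Metric.closedBall θ₀ ρ,
        ‖fderiv ℝ (dipNet n k d φ u) a - fderiv ℝ (dipNet n k d φ u) b‖ ≤
          B * (1 + 2 * (D + ρ)) * Real.sqrt ((n : ℝ) / k) * ‖a - b‖ := by
  intro ρ hρ a ha b hb
  rw [(dipNet_hasFDerivAt φ hφ u a).fderiv, (dipNet_hasFDerivAt φ hφ u b).fderiv]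
  have hDρ : (0:ℝ) ≤ 1 + 2 * (D + ρ) := by nlinarith
  have hC0 : 0 ≤ B * (1 + 2 * (D + ρ)) * Real.sqrt ((n : ℝ) / k) * ‖a - b‖ :=
    mul_nonneg (mul_nonneg (mul_nonneg hB.le hDρ) (Real.sqrt_nonneg _)) (norm_nonneg _)
  apply ContinuousLinearMap.opNorm_le_bound _ hC0
  intro h
  -- basic quantities
  have hk' : (0:ℝ) < Real.sqrt k := Real.sqrt_pos.2 (by exact_mod_cast hk)
  obtain ⟨K, hKdef⟩ : ∃ t : ℝ, t = 1 / Real.sqrt k := ⟨_, rfl⟩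
  have hK0 : 0 ≤ K := by rw [hKdef]; positivity
  obtain ⟨P, hPdef⟩ : ∃ t : ℝ, t = D + ρ := ⟨_, rfl⟩
  have hP0 : 0 < P := by rw [hPdef]; positivity
  have hn1 : (1:ℝ) ≤ Real.sqrt n := by
    rw [Real.one_le_sqrt]
    exact_mod_cast le_trans one_le_two hn
  have Hu : (∑ l : Fin d, u l ^ 2) = 1 := by
    have h1 := EuclideanSpace.norm_eq u
    rw [hu] at h1
    have h2 : Real.sqrt (∑ l : Fin d, ‖u l‖ ^ 2) = 1 := h1.symm
    rw [Real.sqrt_eq_one] at h2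
    simpa [Real.norm_eq_abs, sq_abs] using h2
  have hCS : ∀ x : Fin d → ℝ, (∑ l, x l * u l) ^ 2 ≤ ∑ l, x l ^ 2 := by
    intro x
    have h3 := Finset.sum_mul_sq_le_sq_mul_sq Finset.univ x (fun l => u l)
    simpa [Hu] using h3
  obtain ⟨Xv, hXdef⟩ : ∃ t : ℝ, t = Real.sqrt (∑ p : Fin n × Fin k, h (Sum.inl p) ^ 2) :=
    ⟨_, rfl⟩
  obtain ⟨Yv, hYdef⟩ : ∃ t : ℝ, t = Real.sqrt (∑ p : Fin k × Fin d, h (Sum.inr p) ^ 2) :=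
    ⟨_, rfl⟩
  obtain ⟨Av, hAdef⟩ : ∃ t : ℝ, t = Real.sqrt (∑ p : Fin n × Fin k, (a - b) (Sum.inl p) ^ 2) :=
    ⟨_, rfl⟩
  obtain ⟨Bv, hBdef⟩ : ∃ t : ℝ, t = Real.sqrt (∑ p : Fin k × Fin d, (a - b) (Sum.inr p) ^ 2) :=
    ⟨_, rfl⟩
  have hX0 : 0 ≤ Xv := hXdef ▸ Real.sqrt_nonneg _
  have hY0 : 0 ≤ Yv := hYdef ▸ Real.sqrt_nonneg _
  have hA0 : 0 ≤ Av := hAdef ▸ Real.sqrt_nonneg _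
  have hB0 : 0 ≤ Bv := hBdef ▸ Real.sqrt_nonneg _
  have hX2 : Xv ^ 2 = ∑ p : Fin n × Fin k, h (Sum.inl p) ^ 2 := by
    rw [hXdef, Real.sq_sqrt (by positivity)]
  have hY2 : Yv ^ 2 = ∑ p : Fin k × Fin d, h (Sum.inr p) ^ 2 := by
    rw [hYdef, Real.sq_sqrt (by positivity)]
  have hA2 : Av ^ 2 = ∑ p : Fin n × Fin k, (a - b) (Sum.inl p) ^ 2 := by
    rw [hAdef, Real.sq_sqrt (by positivity)]
  have hB2 : Bv ^ 2 = ∑ p : Fin k × Fin d, (a - b) (Sum.inr p) ^ 2 := by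
    rw [hBdef, Real.sq_sqrt (by positivity)]
  have hsplit_h : Xv ^ 2 + Yv ^ 2 = ‖h‖ ^ 2 := by
    rw [hX2, hY2, norm_sq_split h]
  have hsplit_ab : Av ^ 2 + Bv ^ 2 = ‖a - b‖ ^ 2 := by
    rw [hA2, hB2, norm_sq_split (a - b)]
  have hYH : Yv ≤ ‖h‖ := by nlinarith [norm_nonneg h, sq_nonneg Xv]
  have hBN : Bv ≤ ‖a - b‖ := by nlinarith [norm_nonneg (a - b), sq_nonneg Av]
  -- inner sums
  obtain ⟨sa, hsadef⟩ : ∃ t : Fin k → ℝ, t = fun j => sCLM n k d u j a := ⟨_, rfl⟩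
  obtain ⟨sb, hsbdef⟩ : ∃ t : Fin k → ℝ, t = fun j => sCLM n k d u j b := ⟨_, rfl⟩
  obtain ⟨ev, hevdef⟩ : ∃ t : Fin k → ℝ, t = fun j => sCLM n k d u j h := ⟨_, rfl⟩
  have hsab : ∀ j, (sa j - sb j) ^ 2 ≤ ∑ l : Fin d, (a - b) (Sum.inr (j, l)) ^ 2 := by
    intro j
    have heq : sa j - sb j = ∑ l : Fin d, (a - b) (Sum.inr (j, l)) * u l := by
      simp only [hsadef, hsbdef]
      rw [← map_sub, sCLM_apply]
    rw [heq]; exact hCS _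
  have hev : ∀ j, ev j ^ 2 ≤ ∑ l : Fin d, h (Sum.inr (j, l)) ^ 2 := by
    intro j
    simp only [hevdef]
    rw [sCLM_apply]
    exact hCS _
  have hsum_sab : ∑ j : Fin k, (sa j - sb j) ^ 2 ≤ Bv ^ 2 := by
    calc ∑ j : Fin k, (sa j - sb j) ^ 2
        ≤ ∑ j : Fin k, ∑ l : Fin d, (a - b) (Sum.inr (j, l)) ^ 2 :=
          Finset.sum_le_sum fun j _ => hsab j
      _ = ∑ p : Fin k × Fin d, (a - b) (Sum.inr p) ^ 2 := by
          rw [Fintype.sum_prod_type]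
      _ = Bv ^ 2 := hB2.symm
  have hsum_ev : ∑ j : Fin k, ev j ^ 2 ≤ Yv ^ 2 := by
    calc ∑ j : Fin k, ev j ^ 2
        ≤ ∑ j : Fin k, ∑ l : Fin d, h (Sum.inr (j, l)) ^ 2 :=
          Finset.sum_le_sum fun j _ => hev j
      _ = ∑ p : Fin k × Fin d, h (Sum.inr p) ^ 2 := by
          rw [Fintype.sum_prod_type]
      _ = Yv ^ 2 := hY2.symm
  -- Lipschitz bound for φ
  have hφLip : ∀ x y : ℝ, |φ x - φ y| ≤ B * |x - y| := by
    intro x y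
    have h5 := convex_univ.norm_image_sub_le_of_norm_deriv_le
      (f := φ) (fun z _ => (hφ.differentiable one_ne_zero) z)
      (fun z _ => by simpa [Real.norm_eq_abs] using hφB z) (Set.mem_univ y) (Set.mem_univ x)
    simpa [Real.norm_eq_abs] using h5
  -- column norm bound for b
  have hb' : ‖b - θ₀‖ ≤ ρ := by
    rw [← dist_eq_norm]; exact Metric.mem_closedBall.1 hb
  have hcol : ∀ j : Fin k, (∑ i : Fin n, b (Sum.inl (i, j)) ^ 2) ≤ (P * Real.sqrt n) ^ 2 := by
    intro j
    have hsub : Real.sqrt (∑ i : Fin n, (b (Sum.inl (i, j)) - θ₀ (Sum.inl (i, j))) ^ 2) ≤ ρ := by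
      refine le_trans ?_ hb'
      have hle : (∑ i : Fin n, (b (Sum.inl (i, j)) - θ₀ (Sum.inl (i, j))) ^ 2)
          ≤ ‖b - θ₀‖ ^ 2 := by
        rw [norm_sq_split (b - θ₀)]
        have h6 : (∑ i : Fin n, (b (Sum.inl (i, j)) - θ₀ (Sum.inl (i, j))) ^ 2)
            = ∑ i : Fin n, (b - θ₀) (Sum.inl (i, j)) ^ 2 := rfl
        rw [h6]
        have h7 : (∑ i : Fin n, (b - θ₀) (Sum.inl (i, j)) ^ 2)
            ≤ ∑ p : Fin n × Fin k, (b - θ₀) (Sum.inl p) ^ 2 := by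
          rw [Fintype.sum_prod_type_right]
          exact Finset.single_le_sum
            (f := fun j' => ∑ i : Fin n, (b - θ₀) (Sum.inl (i, j')) ^ 2)
            (fun _ _ => Finset.sum_nonneg fun _ _ => sq_nonneg _) (Finset.mem_univ j)
        have h8 : (0:ℝ) ≤ ∑ p : Fin k × Fin d, (b - θ₀) (Sum.inr p) ^ 2 :=
          Finset.sum_nonneg fun _ _ => sq_nonneg _
        linarith
      calc Real.sqrt (∑ i : Fin n, (b (Sum.inl (i, j)) - θ₀ (Sum.inl (i, j))) ^ 2)
          ≤ Real.sqrt (‖b - θ₀‖ ^ 2) := Real.sqrt_le_sqrt hle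
        _ = ‖b - θ₀‖ := Real.sqrt_sq (norm_nonneg _)
    -- triangle inequality in ℝⁿ
    have htri : Real.sqrt (∑ i : Fin n, b (Sum.inl (i, j)) ^ 2)
        ≤ D * Real.sqrt n + ρ := by
      set v0 : EuclideanSpace ℝ (Fin n) := WithLp.toLp 2 (fun i => θ₀ (Sum.inl (i, j))) with hv0
      set w : EuclideanSpace ℝ (Fin n) :=
        WithLp.toLp 2 (fun i => b (Sum.inl (i, j)) - θ₀ (Sum.inl (i, j))) with hw
      have h0 : Real.sqrt (∑ i : Fin n, b (Sum.inl (i, j)) ^ 2) = ‖v0 + w‖ := by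
        rw [EuclideanSpace.norm_eq]
        congr 1
        refine Finset.sum_congr rfl fun i _ => ?_
        have h9 : (v0 + w) i = b (Sum.inl (i, j)) := by
          have : (v0 + w) i = v0 i + w i := rfl
          rw [this, hv0, hw]; ring
        rw [h9, Real.norm_eq_abs, sq_abs]
      have h10 : ‖v0‖ ≤ D * Real.sqrt n := by
        rw [EuclideanSpace.norm_eq]
        have h11 : (∑ i : Fin n, ‖v0 i‖ ^ 2) = ∑ i : Fin n, θ₀ (Sum.inl (i, j)) ^ 2 := by
          refine Finset.sum_congr rfl fun i _ => ?_
          rw [hv0, Real.norm_eq_abs, sq_abs]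
        rw [h11]; exact hV₀col j
      have h12 : ‖w‖ ≤ ρ := by
        rw [EuclideanSpace.norm_eq]
        have h13 : (∑ i : Fin n, ‖w i‖ ^ 2)
            = ∑ i : Fin n, (b (Sum.inl (i, j)) - θ₀ (Sum.inl (i, j))) ^ 2 := by
          refine Finset.sum_congr rfl fun i _ => ?_
          rw [hw, Real.norm_eq_abs, sq_abs]
        rw [h13]; exact hsub
      calc Real.sqrt (∑ i : Fin n, b (Sum.inl (i, j)) ^ 2) = ‖v0 + w‖ := h0
        _ ≤ ‖v0‖ + ‖w‖ := norm_add_le _ _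
        _ ≤ D * Real.sqrt n + ρ := add_le_add h10 h12
    have htri' : Real.sqrt (∑ i : Fin n, b (Sum.inl (i, j)) ^ 2) ≤ P * Real.sqrt n := by
      have hρn : ρ ≤ ρ * Real.sqrt n := le_mul_of_one_le_right hρ.le hn1
      rw [hPdef]
      calc Real.sqrt (∑ i : Fin n, b (Sum.inl (i, j)) ^ 2) ≤ D * Real.sqrt n + ρ := htri
        _ ≤ D * Real.sqrt n + ρ * Real.sqrt n := by linarith
        _ = (D + ρ) * Real.sqrt n := by ring
    calc (∑ i : Fin n, b (Sum.inl (i, j)) ^ 2)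
        = Real.sqrt (∑ i : Fin n, b (Sum.inl (i, j)) ^ 2) ^ 2 :=
          (Real.sq_sqrt (Finset.sum_nonneg fun _ _ => sq_nonneg _)).symm
      _ ≤ (P * Real.sqrt n) ^ 2 := by
          apply pow_le_pow_left₀ (Real.sqrt_nonneg _) htri' 2
  -- the three pieces
  obtain ⟨T1, hT1def⟩ : ∃ t : EuclideanSpace ℝ (Fin n),
      t = WithLp.toLp 2 (fun i => K * ∑ j : Fin k, h (Sum.inl (i, j)) * (φ (sa j) - φ (sb j))) := ⟨_, rfl⟩
  obtain ⟨T2, hT2def⟩ : ∃ t : EuclideanSpace ℝ (Fin n),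
      t = WithLp.toLp 2 (fun i => K * ∑ j : Fin k, (a - b) (Sum.inl (i, j)) * (deriv φ (sa j) * ev j)) := ⟨_, rfl⟩
  obtain ⟨T3, hT3def⟩ : ∃ t : EuclideanSpace ℝ (Fin n),
      t = WithLp.toLp 2 (fun i => K * ∑ j : Fin k,
        (b (Sum.inl (i, j)) * ev j) * (deriv φ (sa j) - deriv φ (sb j))) := ⟨_, rfl⟩
  have hdecomp : (dipJ n k d φ u a - dipJ n k d φ u b) h = T1 + T2 + T3 := by
    ext i
    have lhs : ((dipJ n k d φ u a - dipJ n k d φ u b) h) i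
        = (dipJ n k d φ u a) h i - (dipJ n k d φ u b) h i := rfl
    have rhs : (T1 + T2 + T3) i = T1 i + T2 i + T3 i := rfl
    rw [lhs, rhs, dipJ_apply, dipJ_apply]
    have hT1i : T1 i = K * ∑ j : Fin k, h (Sum.inl (i, j)) * (φ (sa j) - φ (sb j)) := by
      rw [hT1def]
    have hT2i : T2 i = K * ∑ j : Fin k, (a - b) (Sum.inl (i, j)) * (deriv φ (sa j) * ev j) := by
      rw [hT2def]
    have hT3i : T3 i
        = K * ∑ j : Fin k, (b (Sum.inl (i, j)) * ev j)
          * (deriv φ (sa j) - deriv φ (sb j)) := by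
      rw [hT3def]
    rw [hT1i, hT2i, hT3i]
    simp only [hsadef, hsbdef, hevdef, Finset.mul_sum]
    rw [← Finset.sum_sub_distrib, ← Finset.sum_add_distrib, ← Finset.sum_add_distrib]
    refine Finset.sum_congr rfl fun j _ => ?_
    have hab : (a - b) (Sum.inl (i, j)) = a (Sum.inl (i, j)) - b (Sum.inl (i, j)) := rfl
    rw [hab, hKdef]
    ring
  -- bounds for the three pieces
  have hbd1 : ‖T1‖ ≤ K * (Xv * (B * Bv)) := by
    refine euclid_norm_le T1 K hK0
      (fun i => ∑ j : Fin k, h (Sum.inl (i, j)) * (φ (sa j) - φ (sb j)))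
      (fun i => by rw [hT1def]) _ (mul_nonneg hX0 (mul_nonneg hB.le hB0)) ?_
    refine l2_matvec_bound (fun i j => h (Sum.inl (i, j))) (fun j => φ (sa j) - φ (sb j))
      Xv (B * Bv) hX0 (mul_nonneg hB.le hB0) ?_ ?_
    · rw [hX2, Fintype.sum_prod_type]
    · have hyj : ∀ j : Fin k, (φ (sa j) - φ (sb j)) ^ 2 ≤ B ^ 2 * (sa j - sb j) ^ 2 := by
        intro j
        calc (φ (sa j) - φ (sb j)) ^ 2 = |φ (sa j) - φ (sb j)| ^ 2 := (sq_abs _).symm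
          _ ≤ (B * |sa j - sb j|) ^ 2 :=
              pow_le_pow_left₀ (abs_nonneg _) (hφLip (sa j) (sb j)) 2
          _ = B ^ 2 * (sa j - sb j) ^ 2 := by rw [mul_pow, sq_abs]
      calc ∑ j : Fin k, (φ (sa j) - φ (sb j)) ^ 2
          ≤ ∑ j : Fin k, B ^ 2 * (sa j - sb j) ^ 2 := Finset.sum_le_sum fun j _ => hyj j
        _ = B ^ 2 * ∑ j : Fin k, (sa j - sb j) ^ 2 := (Finset.mul_sum _ _ _).symm
        _ ≤ B ^ 2 * Bv ^ 2 := by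
            exact mul_le_mul_of_nonneg_left hsum_sab (by positivity)
        _ = (B * Bv) ^ 2 := by ring
  have hbd2 : ‖T2‖ ≤ K * (Av * (B * Yv)) := by
    refine euclid_norm_le T2 K hK0
      (fun i => ∑ j : Fin k, (a - b) (Sum.inl (i, j)) * (deriv φ (sa j) * ev j))
      (fun i => by rw [hT2def]) _ (mul_nonneg hA0 (mul_nonneg hB.le hY0)) ?_
    refine l2_matvec_bound (fun i j => (a - b) (Sum.inl (i, j)))
      (fun j => deriv φ (sa j) * ev j) Av (B * Yv) hA0 (mul_nonneg hB.le hY0) ?_ ?_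
    · rw [hA2, Fintype.sum_prod_type]
    · have hyj : ∀ j : Fin k, (deriv φ (sa j) * ev j) ^ 2 ≤ B ^ 2 * ev j ^ 2 := by
        intro j
        have := hφB (sa j)
        calc (deriv φ (sa j) * ev j) ^ 2 = deriv φ (sa j) ^ 2 * ev j ^ 2 := by ring
          _ ≤ B ^ 2 * ev j ^ 2 := by
              apply mul_le_mul_of_nonneg_right _ (sq_nonneg _)
              calc deriv φ (sa j) ^ 2 = |deriv φ (sa j)| ^ 2 := (sq_abs _).symm
                _ ≤ B ^ 2 := pow_le_pow_left₀ (abs_nonneg _) this 2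
      calc ∑ j : Fin k, (deriv φ (sa j) * ev j) ^ 2
          ≤ ∑ j : Fin k, B ^ 2 * ev j ^ 2 := Finset.sum_le_sum fun j _ => hyj j
        _ = B ^ 2 * ∑ j : Fin k, ev j ^ 2 := (Finset.mul_sum _ _ _).symm
        _ ≤ B ^ 2 * Yv ^ 2 := mul_le_mul_of_nonneg_left hsum_ev (by positivity)
        _ = (B * Yv) ^ 2 := by ring
  have hbd3 : ‖T3‖ ≤ K * ((P * Real.sqrt n * Yv) * (B * Bv)) := by
    refine euclid_norm_le T3 K hK0
      (fun i => ∑ j : Fin k, (b (Sum.inl (i, j)) * ev j) * (deriv φ (sa j) - deriv φ (sb j)))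
      (fun i => by rw [hT3def]) _
      (mul_nonneg (mul_nonneg (mul_nonneg hP0.le (Real.sqrt_nonneg _)) hY0)
        (mul_nonneg hB.le hB0)) ?_
    refine l2_matvec_bound (fun i j => b (Sum.inl (i, j)) * ev j)
      (fun j => deriv φ (sa j) - deriv φ (sb j)) (P * Real.sqrt n * Yv) (B * Bv)
      (mul_nonneg (mul_nonneg hP0.le (Real.sqrt_nonneg _)) hY0)
      (mul_nonneg hB.le hB0) ?_ ?_
    · calc ∑ i : Fin n, ∑ j : Fin k, (b (Sum.inl (i, j)) * ev j) ^ 2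
          = ∑ j : Fin k, ∑ i : Fin n, b (Sum.inl (i, j)) ^ 2 * ev j ^ 2 := by
            rw [Finset.sum_comm]
            exact Finset.sum_congr rfl fun j _ => Finset.sum_congr rfl fun i _ => by ring
        _ = ∑ j : Fin k, (∑ i : Fin n, b (Sum.inl (i, j)) ^ 2) * ev j ^ 2 := by
            exact Finset.sum_congr rfl fun j _ => (Finset.sum_mul _ _ _).symm
        _ ≤ ∑ j : Fin k, (P * Real.sqrt n) ^ 2 * ev j ^ 2 :=
            Finset.sum_le_sum fun j _ =>
              mul_le_mul_of_nonneg_right (hcol j) (sq_nonneg _)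
        _ = (P * Real.sqrt n) ^ 2 * ∑ j : Fin k, ev j ^ 2 := (Finset.mul_sum _ _ _).symm
        _ ≤ (P * Real.sqrt n) ^ 2 * Yv ^ 2 :=
            mul_le_mul_of_nonneg_left hsum_ev (sq_nonneg _)
        _ = (P * Real.sqrt n * Yv) ^ 2 := by ring
    · have hyj : ∀ j : Fin k, (deriv φ (sa j) - deriv φ (sb j)) ^ 2
          ≤ B ^ 2 * (sa j - sb j) ^ 2 := by
        intro j
        calc (deriv φ (sa j) - deriv φ (sb j)) ^ 2
            = |deriv φ (sa j) - deriv φ (sb j)| ^ 2 := (sq_abs _).symm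
          _ ≤ (B * |sa j - sb j|) ^ 2 :=
              pow_le_pow_left₀ (abs_nonneg _) (hφlip (sa j) (sb j)) 2
          _ = B ^ 2 * (sa j - sb j) ^ 2 := by rw [mul_pow, sq_abs]
      calc ∑ j : Fin k, (deriv φ (sa j) - deriv φ (sb j)) ^ 2
          ≤ ∑ j : Fin k, B ^ 2 * (sa j - sb j) ^ 2 := Finset.sum_le_sum fun j _ => hyj j
        _ = B ^ 2 * ∑ j : Fin k, (sa j - sb j) ^ 2 := (Finset.mul_sum _ _ _).symm
        _ ≤ B ^ 2 * Bv ^ 2 := mul_le_mul_of_nonneg_left hsum_sab (by positivity)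
        _ = (B * Bv) ^ 2 := by ring
  -- combine
  have hcross : Xv * Bv + Av * Yv ≤ ‖h‖ * ‖a - b‖ := by
    have hsq : (Xv * Bv + Av * Yv) ^ 2 ≤ (‖h‖ * ‖a - b‖) ^ 2 := by
      have h14 : (Xv * Bv + Av * Yv) ^ 2 ≤ (Xv ^ 2 + Yv ^ 2) * (Av ^ 2 + Bv ^ 2) := by
        nlinarith [sq_nonneg (Xv * Av - Yv * Bv)]
      calc (Xv * Bv + Av * Yv) ^ 2 ≤ (Xv ^ 2 + Yv ^ 2) * (Av ^ 2 + Bv ^ 2) := h14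
        _ = (‖h‖ * ‖a - b‖) ^ 2 := by rw [hsplit_h, hsplit_ab]; ring
    nlinarith [mul_nonneg (norm_nonneg h) (norm_nonneg (a - b)),
      add_nonneg (mul_nonneg hX0 hB0) (mul_nonneg hA0 hY0)]
  have hYB : Yv * Bv ≤ ‖h‖ * ‖a - b‖ :=
    mul_le_mul hYH hBN hB0 (norm_nonneg h)
  have hsqrtn0 : (0:ℝ) ≤ Real.sqrt n := Real.sqrt_nonneg _
  have hdiv : Real.sqrt ((n : ℝ) / k) = Real.sqrt n / Real.sqrt k :=
    Real.sqrt_div (by positivity) _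
  calc ‖(dipJ n k d φ u a - dipJ n k d φ u b) h‖ = ‖T1 + T2 + T3‖ := by rw [hdecomp]
    _ ≤ ‖T1‖ + ‖T2‖ + ‖T3‖ := norm_add₃_le
    _ ≤ K * (Xv * (B * Bv)) + K * (Av * (B * Yv)) + K * ((P * Real.sqrt n * Yv) * (B * Bv)) :=
        add_le_add (add_le_add hbd1 hbd2) hbd3
    _ = K * B * ((Xv * Bv + Av * Yv) + P * Real.sqrt n * (Yv * Bv)) := by ring
    _ ≤ K * B * ((‖h‖ * ‖a - b‖) + P * Real.sqrt n * (‖h‖ * ‖a - b‖)) := by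
        apply mul_le_mul_of_nonneg_left _ (mul_nonneg hK0 hB.le)
        exact add_le_add hcross
          (mul_le_mul_of_nonneg_left hYB (mul_nonneg hP0.le hsqrtn0))
    _ = K * B * (1 + P * Real.sqrt n) * (‖h‖ * ‖a - b‖) := by ring
    _ ≤ K * B * ((1 + 2 * P) * Real.sqrt n) * (‖h‖ * ‖a - b‖) := by
        apply mul_le_mul_of_nonneg_right _
          (mul_nonneg (norm_nonneg h) (norm_nonneg (a - b)))
        apply mul_le_mul_of_nonneg_left _ (mul_nonneg hK0 hB.le)
        nlinarith [mul_nonneg hP0.le hsqrtn0]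
    _ = B * (1 + 2 * (D + ρ)) * Real.sqrt ((n : ℝ) / k) * ‖a - b‖ * ‖h‖ := by
        rw [hdiv, hKdef, hPdef]; field_simp
end
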